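/- arXiv:2209.11850 — 4 statements merged into one kernel-verified Lean document; each statement's English description precedes it below -/
import Mathlib

section
/- Let n ≥ 2 and N ≥ 1. If f belongs to the cone 𝓔, then E f ≥ 0 (first Griffiths inequality for non-interacting rotors). -/
open MeasureTheory RealInnerProductSpace Set
open scoped ENNReal Pointwise

/-- The normalized (uniform probability) measure on the unit sphere `S^{n-1} ⊂ ℝ^n`. -/
noncomputable def sphereUniform (n : ℕ) :
    Measure (Metric.sphere (0 : EuclideanSpace ℝ (Fin n)) 1) :=
  ((volume : Measure (EuclideanSpace ℝ (Fin n))).toSphere Set.univ)⁻¹ •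
    (volume : Measure (EuclideanSpace ℝ (Fin n))).toSphere

/-- The product measure `dσ₁ ⋯ dσ_N` of `N` copies of the normalized uniform measure. -/
noncomputable def spinMeasure (n N : ℕ) :
    Measure (Fin N → Metric.sphere (0 : EuclideanSpace ℝ (Fin n)) 1) :=
  Measure.pi fun _ => sphereUniform n

/-- The cone `𝓔` of finite linear combinations with nonnegative coefficients of monomials
`∏_{1 ≤ i < j ≤ N} (σ_i · σ_j)^{n_{ij}}`. -/
def InCone (n N : ℕ)
    (f : (Fin N → Metric.sphere (0 : EuclideanSpace ℝ (Fin n)) 1) → ℝ) : Prop :=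
  ∃ (K : ℕ) (c : Fin K → ℝ) (e : Fin K → Fin N → Fin N → ℕ),
    (∀ k, 0 ≤ c k) ∧
    ∀ σ, f σ = ∑ k, c k *
      ∏ p ∈ Finset.univ.filter (fun p : Fin N × Fin N => p.1 < p.2),
        (⟪(σ p.1 : EuclideanSpace ℝ (Fin n)), (σ p.2 : EuclideanSpace ℝ (Fin n))⟫ : ℝ)
          ^ e k p.1 p.2


theorem sphereUniform_prob (n : ℕ) (hn : 1 ≤ n) : IsProbabilityMeasure (sphereUniform n) := by
  constructor
  rw [sphereUniform, Measure.smul_apply, smul_eq_mul]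
  refine ENNReal.inv_mul_cancel ?_ (measure_ne_top _ _)
  rw [Measure.toSphere_apply_univ]
  have h1 : (0:ℝ≥0∞) < volume (Metric.ball (0:EuclideanSpace ℝ (Fin n)) 1) :=
    Metric.measure_ball_pos _ _ one_pos
  have h2 : Module.finrank ℝ (EuclideanSpace ℝ (Fin n)) = n := by
    simp [finrank_euclideanSpace]
  exact mul_ne_zero (by simp [h2]; omega) h1.ne'

/-- A continuous real function on a compact space with a finite measure is integrable. -/
theorem cont_integrable {α : Type*} [TopologicalSpace α] [CompactSpace α] [MeasurableSpace α]
    [OpensMeasurableSpace α] (μ : Measure α) [IsFiniteMeasure μ] (f : α → ℝ)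
    (hf : Continuous f) : Integrable f μ :=
  hf.integrable_of_hasCompactSupport (isClosed_tsupport f).isCompact

variable {n : ℕ}

/-- reflection in coordinate a -/
noncomputable def refl0 (n : ℕ) (a : Fin n) :
    EuclideanSpace ℝ (Fin n) ≃ₗᵢ[ℝ] EuclideanSpace ℝ (Fin n) :=
  LinearIsometryEquiv.piLpCongrRight 2
    (fun i => if i = a then LinearIsometryEquiv.neg ℝ else LinearIsometryEquiv.refl ℝ ℝ)

theorem refl0_apply (a : Fin n) (x : EuclideanSpace ℝ (Fin n)) (i : Fin n) :
    refl0 n a x i = if i = a then -x i else x i := by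
  rw [refl0, LinearIsometryEquiv.piLpCongrRight_apply]
  by_cases h : i = a
  · subst h; simp
  · simp [h]

noncomputable def reflS (a : Fin n) :
    Metric.sphere (0 : EuclideanSpace ℝ (Fin n)) 1 ≃ₜ
      Metric.sphere (0 : EuclideanSpace ℝ (Fin n)) 1 where
  toFun σ := ⟨refl0 n a σ, by
    have := σ.2
    simp only [mem_sphere_iff_norm, sub_zero] at this ⊢
    rw [(refl0 n a).norm_map]; exact this⟩
  invFun σ := ⟨(refl0 n a).symm σ, by
    have := σ.2
    simp only [mem_sphere_iff_norm, sub_zero] at this ⊢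
    rw [(refl0 n a).symm.norm_map]; exact this⟩
  left_inv σ := by ext; simp
  right_inv σ := by ext; simp
  continuous_toFun := by
    exact Continuous.subtype_mk ((refl0 n a).continuous.comp continuous_subtype_val) _
  continuous_invFun := by
    exact Continuous.subtype_mk ((refl0 n a).symm.continuous.comp continuous_subtype_val) _

theorem measurePreserving_reflS (a : Fin n) :
    MeasurePreserving (reflS a) (sphereUniform n) (sphereUniform n) := by
  have key : (volume : Measure (EuclideanSpace ℝ (Fin n))).toSphere.map (reflS a)
      = (volume : Measure (EuclideanSpace ℝ (Fin n))).toSphere := by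
    ext s hs
    rw [Measure.map_apply (reflS a).continuous.measurable hs,
      Measure.toSphere_apply' _ (hs.preimage (reflS a).continuous.measurable),
      Measure.toSphere_apply' _ hs]
    congr 1
    have him : (Subtype.val '' ((reflS a) ⁻¹' s) : Set (EuclideanSpace ℝ (Fin n)))
        = (refl0 n a) ⁻¹' (Subtype.val '' s) := by
      ext x
      constructor
      · rintro ⟨σ, hσ, rfl⟩
        exact ⟨reflS a σ, hσ, rfl⟩
      · rintro ⟨τ, hτ, hx⟩
        have hxs : x ∈ Metric.sphere (0 : EuclideanSpace ℝ (Fin n)) 1 := by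
          have : ‖x‖ = 1 := by
            have h1 : ‖refl0 n a x‖ = 1 := by
              rw [← hx]; simpa [mem_sphere_iff_norm] using τ.2
            rwa [(refl0 n a).norm_map] at h1
          simpa [mem_sphere_iff_norm]
        refine ⟨⟨x, hxs⟩, ?_, rfl⟩
        show reflS a ⟨x, hxs⟩ ∈ s
        have : reflS a ⟨x, hxs⟩ = τ := by
          apply Subtype.ext; exact hx.symm
        rw [this]; exact hτ
    rw [him]
    have hsm : Ioo (0:ℝ) 1 • ((refl0 n a) ⁻¹' (Subtype.val '' s))
        = (refl0 n a) ⁻¹' (Ioo (0:ℝ) 1 • (Subtype.val '' s)) := by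
      ext x
      simp only [Set.mem_smul_set, Set.mem_preimage]
      constructor
      · rintro ⟨c, hc, y, hy, rfl⟩
        exact ⟨c, hc, refl0 n a y, hy, by simp [_root_.map_smul]⟩
      · rintro ⟨c, hc, y, hy, hxy⟩
        refine ⟨c, hc, (refl0 n a).symm y, by simpa using hy, ?_⟩
        apply (refl0 n a).injective
        simp [_root_.map_smul, hxy]
    rw [hsm]
    exact ((refl0 n a).measurePreserving).measure_preimage_emb
      (refl0 n a).toHomeomorph.measurableEmbedding _
  constructor
  · exact (reflS a).continuous.measurable
  · rw [sphereUniform, Measure.map_smul, key]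

/-- Lemma A : the integral over the sphere of a coordinate monomial is nonnegative. -/
theorem sphere_monomial_nonneg (n : ℕ) (m : Fin n → ℕ) :
    0 ≤ ∫ v : Metric.sphere (0 : EuclideanSpace ℝ (Fin n)) 1,
      ∏ a, ((v : EuclideanSpace ℝ (Fin n)) a) ^ m a ∂(sphereUniform n) := by
  by_cases hall : ∀ a, Even (m a)
  · refine integral_nonneg fun v => Finset.prod_nonneg fun a _ => (hall a).pow_nonneg _
  · push_neg at hall
    obtain ⟨a, ha⟩ := hall
    rw [Nat.not_even_iff_odd] at ha
    set g : Metric.sphere (0 : EuclideanSpace ℝ (Fin n)) 1 → ℝ :=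
      fun v => ∏ b, ((v : EuclideanSpace ℝ (Fin n)) b) ^ m b with hg
    have hcomp : ∀ v, g (reflS a v) = - g v := by
      intro v
      have hco : ∀ b, ((reflS a v : EuclideanSpace ℝ (Fin n)) b) ^ m b
          = (if b = a then (-1 : ℝ)^ m b else 1) * ((v : EuclideanSpace ℝ (Fin n)) b) ^ m b := by
        intro b
        have : (reflS a v : EuclideanSpace ℝ (Fin n)) b
            = if b = a then -(v : EuclideanSpace ℝ (Fin n)) b
              else (v : EuclideanSpace ℝ (Fin n)) b := refl0_apply a v b
        rw [this]
        by_cases h : b = a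
        · rw [if_pos h, if_pos h, neg_pow]
        · rw [if_neg h, if_neg h, one_mul]
      simp only [hg, hco]
      rw [Finset.prod_mul_distrib]
      have : ∏ b, (if b = a then (-1:ℝ)^ m b else 1) = -1 := by
        rw [Finset.prod_ite_eq' Finset.univ a (fun b => (-1:ℝ)^ m b)]
        simp [ha.neg_one_pow]
      rw [this]; ring
    have hint : ∫ v, g v ∂(sphereUniform n)
        = ∫ v, g (reflS a v) ∂(sphereUniform n) := by
      rw [(measurePreserving_reflS a).integral_comp
        (reflS a).measurableEmbedding g]
    have h2 : ∫ v, g (reflS a v) ∂(sphereUniform n) = - ∫ v, g v ∂(sphereUniform n) := by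
      simp only [hcomp]
      exact integral_neg g
    have h0 : ∫ v, g v ∂(sphereUniform n) = 0 := by
      have := hint.trans h2
      linarith
    exact le_of_eq h0.symm

/-- Lemma A': integral over the sphere of any product of coordinates is nonnegative. -/
theorem sphere_coordProd_nonneg (n : ℕ) {ι : Type*} (T : Finset ι) (co : ι → Fin n) :
    0 ≤ ∫ v : Metric.sphere (0 : EuclideanSpace ℝ (Fin n)) 1,
      ∏ t ∈ T, ((v : EuclideanSpace ℝ (Fin n)) (co t)) ∂(sphereUniform n) := by
  classical
  have key : ∀ v : Metric.sphere (0 : EuclideanSpace ℝ (Fin n)) 1,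
      ∏ t ∈ T, ((v : EuclideanSpace ℝ (Fin n)) (co t))
        = ∏ a, ((v : EuclideanSpace ℝ (Fin n)) a) ^ (T.filter (fun t => co t = a)).card := by
    intro v
    rw [← Finset.prod_fiberwise_of_maps_to (fun t _ => Finset.mem_univ (co t))
      (fun t => ((v : EuclideanSpace ℝ (Fin n)) (co t)))]
    refine Finset.prod_congr rfl fun a _ => ?_
    rw [← Finset.prod_const]
    exact Finset.prod_congr rfl fun t ht => by rw [(Finset.mem_filter.mp ht).2]
  simp only [key]
  exact sphere_monomial_nonneg n _

/-- Lemma B: integral over the spin configuration space of a product of spin coordinates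
is nonnegative. -/
theorem spin_coordProd_nonneg (n N : ℕ) (hn : 1 ≤ n) {ι : Type*} (T : Finset ι)
    (sp : ι → Fin N) (co : ι → Fin n) :
    0 ≤ ∫ σ : Fin N → Metric.sphere (0 : EuclideanSpace ℝ (Fin n)) 1,
      ∏ t ∈ T, ((σ (sp t) : EuclideanSpace ℝ (Fin n)) (co t)) ∂(spinMeasure n N) := by
  classical
  letI : MeasureSpace (Metric.sphere (0 : EuclideanSpace ℝ (Fin n)) 1) := ⟨sphereUniform n⟩
  haveI : IsProbabilityMeasure (volume : Measure (Metric.sphere (0 : EuclideanSpace ℝ (Fin n)) 1)) :=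
    sphereUniform_prob n hn
  have key : ∀ σ : Fin N → Metric.sphere (0 : EuclideanSpace ℝ (Fin n)) 1,
      ∏ t ∈ T, ((σ (sp t) : EuclideanSpace ℝ (Fin n)) (co t))
        = ∏ i, (fun v : Metric.sphere (0 : EuclideanSpace ℝ (Fin n)) 1 =>
            ∏ t ∈ T.filter (fun t => sp t = i), ((v : EuclideanSpace ℝ (Fin n)) (co t))) (σ i) := by
    intro σ
    rw [← Finset.prod_fiberwise_of_maps_to (fun t _ => Finset.mem_univ (sp t))
      (fun t => ((σ (sp t) : EuclideanSpace ℝ (Fin n)) (co t)))]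
    refine Finset.prod_congr rfl fun i _ => ?_
    exact Finset.prod_congr rfl fun t ht => by rw [(Finset.mem_filter.mp ht).2]
  simp only [key]
  have heq : spinMeasure n N
      = (volume : Measure (Fin N → Metric.sphere (0 : EuclideanSpace ℝ (Fin n)) 1)) := rfl
  rw [spinMeasure, MeasureTheory.integral_fintype_prod_eq_prod (ι := Fin N)
    (fun i (v : Metric.sphere (0 : EuclideanSpace ℝ (Fin n)) 1) =>
      ∏ t ∈ T.filter (fun t => sp t = i), ((v : EuclideanSpace ℝ (Fin n)) (co t)))]
  exact Finset.prod_nonneg fun i _ => sphere_coordProd_nonneg n _ _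


theorem coord_cont (n N : ℕ) (i : Fin N) (a : Fin n) :
    Continuous (fun σ : Fin N → Metric.sphere (0 : EuclideanSpace ℝ (Fin n)) 1 =>
      (σ i : EuclideanSpace ℝ (Fin n)) a) := by
  have h1 : Continuous (fun σ : Fin N → Metric.sphere (0 : EuclideanSpace ℝ (Fin n)) 1 =>
      (σ i : EuclideanSpace ℝ (Fin n))) :=
    continuous_subtype_val.comp (continuous_apply i)
  have h2 : Continuous (fun x : EuclideanSpace ℝ (Fin n) => x a) :=
    (EuclideanSpace.proj a).continuous
  exact h2.comp h1

theorem inner_monomial_nonneg (n N : ℕ) (hn : 1 ≤ n) (ee : Fin N → Fin N → ℕ) :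
    0 ≤ ∫ σ : Fin N → Metric.sphere (0 : EuclideanSpace ℝ (Fin n)) 1,
      ∏ p ∈ Finset.univ.filter (fun p : Fin N × Fin N => p.1 < p.2),
        (⟪(σ p.1 : EuclideanSpace ℝ (Fin n)), (σ p.2 : EuclideanSpace ℝ (Fin n))⟫ : ℝ)
          ^ ee p.1 p.2 ∂(spinMeasure n N) := by
  classical
  haveI : IsProbabilityMeasure (sphereUniform n) := sphereUniform_prob n hn
  haveI : IsProbabilityMeasure (spinMeasure n N) := by
    rw [spinMeasure]; infer_instance
  set P : Finset (Fin N × Fin N) :=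
    Finset.univ.filter (fun p : Fin N × Fin N => p.1 < p.2) with hP
  set S : Finset (Σ p : Fin N × Fin N, Fin (ee p.1 p.2)) :=
    P.sigma (fun p => Finset.univ) with hS
  have expand : ∀ σ : Fin N → Metric.sphere (0 : EuclideanSpace ℝ (Fin n)) 1,
      ∏ p ∈ P, (⟪(σ p.1 : EuclideanSpace ℝ (Fin n)),
          (σ p.2 : EuclideanSpace ℝ (Fin n))⟫ : ℝ) ^ ee p.1 p.2
        = ∑ g ∈ S.pi (fun _ => (Finset.univ : Finset (Fin n))),
            ∏ x ∈ S.attach,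
              ((σ x.1.1.1 : EuclideanSpace ℝ (Fin n)) (g x.1 x.2)
                * (σ x.1.1.2 : EuclideanSpace ℝ (Fin n)) (g x.1 x.2)) := by
    intro σ
    have h1 : ∀ p : Fin N × Fin N,
        (⟪(σ p.1 : EuclideanSpace ℝ (Fin n)), (σ p.2 : EuclideanSpace ℝ (Fin n))⟫ : ℝ)
          = ∑ a, (σ p.1 : EuclideanSpace ℝ (Fin n)) a * (σ p.2 : EuclideanSpace ℝ (Fin n)) a := by
      intro p
      rw [PiLp.inner_apply]
      simp [RCLike.inner_apply, conj_trivial]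
      exact Finset.sum_congr rfl fun _ _ => mul_comm _ _
    calc ∏ p ∈ P, (⟪(σ p.1 : EuclideanSpace ℝ (Fin n)),
            (σ p.2 : EuclideanSpace ℝ (Fin n))⟫ : ℝ) ^ ee p.1 p.2
        = ∏ p ∈ P, ∏ _t ∈ (Finset.univ : Finset (Fin (ee p.1 p.2))),
            (∑ a, (σ p.1 : EuclideanSpace ℝ (Fin n)) a
              * (σ p.2 : EuclideanSpace ℝ (Fin n)) a) := by
          refine Finset.prod_congr rfl fun p _ => ?_
          rw [h1 p, Finset.prod_const]
          simp
      _ = ∏ x ∈ S, (∑ a, (σ x.1.1 : EuclideanSpace ℝ (Fin n)) a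
              * (σ x.1.2 : EuclideanSpace ℝ (Fin n)) a) := by
          rw [hS]
          exact (Finset.prod_sigma P (fun p => Finset.univ)
            (fun x => ∑ a, (σ x.1.1 : EuclideanSpace ℝ (Fin n)) a
              * (σ x.1.2 : EuclideanSpace ℝ (Fin n)) a)).symm
      _ = _ := by
          rw [Finset.prod_sum]
  simp only [expand]
  rw [integral_finset_sum]
  · refine Finset.sum_nonneg fun g _ => ?_
    have hpt : ∀ σ : Fin N → Metric.sphere (0 : EuclideanSpace ℝ (Fin n)) 1,
        ∏ x ∈ S.attach,
          ((σ x.1.1.1 : EuclideanSpace ℝ (Fin n)) (g x.1 x.2)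
            * (σ x.1.1.2 : EuclideanSpace ℝ (Fin n)) (g x.1 x.2))
        = ∏ q ∈ (Finset.univ : Finset ({x // x ∈ S} × Bool)),
            ((σ ((fun q : {x // x ∈ S} × Bool =>
                if q.2 then q.1.1.1.1 else q.1.1.1.2) q) : EuclideanSpace ℝ (Fin n))
              ((fun q : {x // x ∈ S} × Bool => g q.1.1 q.1.2) q)) := by
      intro σ
      rw [Fintype.prod_prod_type]
      rw [Finset.univ_eq_attach]
      refine Finset.prod_congr rfl fun x _ => ?_
      rw [Fintype.prod_bool]
      simp
    have := spin_coordProd_nonneg n N hn (Finset.univ : Finset ({x // x ∈ S} × Bool))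
      (fun q => if q.2 then q.1.1.1.1 else q.1.1.1.2) (fun q => g q.1.1 q.1.2)
    simpa only [← hpt] using this
  · intro g _
    refine cont_integrable _ _ ?_
    refine continuous_finset_prod _ fun x _ => ?_
    exact (coord_cont n N _ _).mul (coord_cont n N _ _)


/-- First Griffiths inequality for non-interacting rotors: if `f ∈ 𝓔` then `E f ≥ 0`. -/
theorem first_griffiths_noninteracting (n N : ℕ) (hn : 2 ≤ n) (hN : 1 ≤ N)
    (f : (Fin N → Metric.sphere (0 : EuclideanSpace ℝ (Fin n)) 1) → ℝ)
    (hf : InCone n N f) :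
    0 ≤ ∫ σ, f σ ∂(spinMeasure n N) := by
  obtain ⟨K, c, e, hc, hfe⟩ := hf
  haveI : IsProbabilityMeasure (sphereUniform n) := sphereUniform_prob n (by omega)
  haveI : IsProbabilityMeasure (spinMeasure n N) := by
    rw [spinMeasure]; infer_instance
  have hcont : ∀ k : Fin K, Continuous
      (fun σ : Fin N → Metric.sphere (0 : EuclideanSpace ℝ (Fin n)) 1 =>
        c k * ∏ p ∈ Finset.univ.filter (fun p : Fin N × Fin N => p.1 < p.2),
          (⟪(σ p.1 : EuclideanSpace ℝ (Fin n)), (σ p.2 : EuclideanSpace ℝ (Fin n))⟫ : ℝ)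
            ^ e k p.1 p.2) := by
    intro k
    refine continuous_const.mul ?_
    refine continuous_finset_prod _ fun p _ => ?_
    refine Continuous.pow ?_ _
    exact Continuous.inner (continuous_subtype_val.comp (continuous_apply p.1))
      (continuous_subtype_val.comp (continuous_apply p.2))
  simp only [hfe]
  rw [integral_finset_sum _ (fun k _ => cont_integrable _ _ (hcont k))]
  refine Finset.sum_nonneg fun k _ => ?_
  rw [MeasureTheory.integral_const_mul]
  exact mul_nonneg (hc k) (inner_monomial_nonneg n N (by omega) (e k))
end

section
/- Let n ≥ 2, N ≥ 1, indices i, j ∈ {1,…,N}, and nonnegative integers n_{lk} for 1 ≤ l < k ≤ N. Then the integral J = ∫ [σ_i · (I − P_{σ_1}) σ_j] ∏_{1≤l<k≤N} (σ_l·σ_k)^{n_{lk}} dσ_1⋯dσ_N is nonnegative, where P_{σ_1} denotes the orthogonal projection of ℝ^n onto the span of σ_1, so that σ_i · (I − P_{σ_1}) σ_j = σ_i·σ_j − (σ_i·σ_1)(σ_1·σ_j). -/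
open MeasureTheory RealInnerProductSpace
open scoped Pointwise

namespace SpinProof

variable {n : ℕ}

abbrev E (n : ℕ) := EuclideanSpace ℝ (Fin n)
abbrev S (n : ℕ) := Metric.sphere (0 : E n) 1

/-- map on the sphere induced by a linear isometry equivalence -/
noncomputable def sphereMap (g : E n ≃ₗᵢ[ℝ] E n) (x : S n) : S n :=
  ⟨g x, by
    rw [mem_sphere_zero_iff_norm, g.norm_map]
    exact mem_sphere_zero_iff_norm.1 x.2⟩

@[simp] lemma sphereMap_coe (g : E n ≃ₗᵢ[ℝ] E n) (x : S n) :
    (sphereMap g x : E n) = g x := rfl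

lemma continuous_sphereMap (g : E n ≃ₗᵢ[ℝ] E n) : Continuous (sphereMap g) :=
  Continuous.subtype_mk (g.continuous.comp continuous_subtype_val) _

/-- the sphere map as a homeomorphism -/
noncomputable def sphereHomeo (g : E n ≃ₗᵢ[ℝ] E n) : S n ≃ₜ S n where
  toFun := sphereMap g
  invFun := sphereMap g.symm
  left_inv x := Subtype.ext (by simp)
  right_inv x := Subtype.ext (by simp)
  continuous_toFun := continuous_sphereMap g
  continuous_invFun := continuous_sphereMap g.symm

lemma measurableEmbedding_sphereMap (g : E n ≃ₗᵢ[ℝ] E n) :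
    MeasurableEmbedding (sphereMap g) :=
  (sphereHomeo g).toMeasurableEquiv.measurableEmbedding

lemma measurePreserving_toSphere (g : E n ≃ₗᵢ[ℝ] E n) :
    MeasurePreserving (sphereMap g)
      (volume : Measure (E n)).toSphere (volume : Measure (E n)).toSphere := by
  have hm : Measurable (sphereMap g) := (continuous_sphereMap g).measurable
  refine ⟨hm, ?_⟩
  refine Measure.ext fun s hs => ?_
  rw [Measure.map_apply hm hs, Measure.toSphere_apply' _ (hm hs),
    Measure.toSphere_apply' _ hs]
  have hset : (Subtype.val '' (sphereMap g ⁻¹' s)) = g ⁻¹' (Subtype.val '' s) := by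
    ext x
    constructor
    · rintro ⟨y, hy, rfl⟩
      exact ⟨sphereMap g y, hy, rfl⟩
    · rintro ⟨z, hz, hzx⟩
      have hx : x ∈ Metric.sphere (0 : E n) 1 := by
        rw [mem_sphere_zero_iff_norm, ← g.norm_map, ← hzx]
        exact mem_sphere_zero_iff_norm.1 z.2
      refine ⟨⟨x, hx⟩, ?_, rfl⟩
      show sphereMap g ⟨x, hx⟩ ∈ s
      have : sphereMap g ⟨x, hx⟩ = z := Subtype.ext hzx.symm
      rw [this]; exact hz
  have hsmul : Set.Ioo (0:ℝ) 1 • (g ⁻¹' (Subtype.val '' s))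
      = g ⁻¹' (Set.Ioo (0:ℝ) 1 • (Subtype.val '' s)) := by
    ext x
    constructor
    · rintro ⟨c, hc, y, hy, rfl⟩
      exact ⟨c, hc, g y, hy, by rw [_root_.map_smul]⟩
    · rintro ⟨c, hc, a, ha, hca⟩
      refine ⟨c, hc, g.symm a, by simpa using ha, ?_⟩
      apply g.injective
      rw [_root_.map_smul]
      simpa using hca
  rw [hset, hsmul,
    g.measurePreserving.measure_preimage_emb g.toHomeomorph.measurableEmbedding]

lemma measurePreserving_sphereUniform (g : E n ≃ₗᵢ[ℝ] E n) :
    MeasurePreserving (sphereMap g) (sphereUniform n) (sphereUniform n) :=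
  ⟨(continuous_sphereMap g).measurable, by
    rw [sphereUniform, Measure.map_smul, (measurePreserving_toSphere g).map_eq]⟩

lemma nontrivial_E (hn : 1 ≤ n) : Nontrivial (E n) := by
  refine ⟨EuclideanSpace.single ⟨0, hn⟩ (1:ℝ), 0, ?_⟩
  intro h
  have := congrArg (fun v : E n => v ⟨0, hn⟩) h
  rw [EuclideanSpace.single_apply] at this
  simp at this

lemma toSphere_univ_ne_zero (hn : 1 ≤ n) :
    (volume : Measure (E n)).toSphere Set.univ ≠ 0 := by
  haveI := nontrivial_E hn
  rw [Measure.toSphere_apply_univ]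
  refine mul_ne_zero ?_ (Metric.measure_ball_pos volume (0 : E n) one_pos).ne'
  have h1 : Module.finrank ℝ (E n) = n := finrank_euclideanSpace_fin
  rw [h1]
  exact Nat.cast_ne_zero.mpr (by omega)

lemma isProbabilityMeasure_sphereUniform (hn : 1 ≤ n) :
    IsProbabilityMeasure (sphereUniform n) := by
  constructor
  rw [sphereUniform, Measure.smul_apply, smul_eq_mul]
  exact ENNReal.inv_mul_cancel (toSphere_univ_ne_zero hn) (measure_ne_top _ _)

/-- continuity of a coordinate function on the sphere -/
lemma continuous_coord (a : Fin n) : Continuous (fun x : S n => (x : E n) a) := by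
  exact ((continuous_apply a).comp (PiLp.continuous_ofLp 2 _)).comp continuous_subtype_val

lemma abs_coord_le_one (x : S n) (a : Fin n) : |(x : E n) a| ≤ 1 := by
  have h1 : (x : E n) a = ⟪EuclideanSpace.single a (1:ℝ), (x : E n)⟫ := by
    rw [EuclideanSpace.inner_single_left]; simp
  rw [h1]
  calc |⟪EuclideanSpace.single a (1:ℝ), (x : E n)⟫|
      ≤ ‖EuclideanSpace.single a (1:ℝ)‖ * ‖(x : E n)‖ := abs_real_inner_le_norm _ _
    _ = 1 := by
        rw [EuclideanSpace.norm_single, mem_sphere_zero_iff_norm.1 x.2]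
        simp

/-- a monomial in the coordinates, as a function on the sphere -/
lemma integrable_sphere_monomial (hn : 1 ≤ n) (e : Fin n → ℕ) :
    Integrable (fun x : S n => ∏ a, ((x : E n) a) ^ (e a)) (sphereUniform n) := by
  haveI := isProbabilityMeasure_sphereUniform hn
  have hc : Continuous (fun x : S n => ∏ a, ((x : E n) a) ^ (e a)) :=
    continuous_finset_prod _ fun a _ => (continuous_coord a).pow _
  refine (integrable_const (1:ℝ)).mono' hc.aestronglyMeasurable (ae_of_all _ fun x => ?_)
  rw [Real.norm_eq_abs, Finset.abs_prod]
  refine Finset.prod_le_one (fun a _ => abs_nonneg _) (fun a _ => ?_)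
  rw [abs_pow]
  exact pow_le_one₀ (abs_nonneg _) (abs_coord_le_one x a)

/-- nonnegativity of monomial moments on the sphere -/
lemma sphere_moment_nonneg (hn : 1 ≤ n) (e : Fin n → ℕ) :
    0 ≤ ∫ x : S n, ∏ a, ((x : E n) a) ^ (e a) ∂(sphereUniform n) := by
  by_cases h : ∀ a, Even (e a)
  · exact integral_nonneg fun x => Finset.prod_nonneg fun a _ => (h a).pow_nonneg _
  · push_neg at h
    obtain ⟨b, hb⟩ := h
    rw [Nat.not_even_iff_odd] at hb
    set g : E n ≃ₗᵢ[ℝ] E n := LinearIsometryEquiv.piLpCongrRight 2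
      (fun a => if a = b then LinearIsometryEquiv.neg ℝ else LinearIsometryEquiv.refl ℝ ℝ) with hg
    have hcoord : ∀ (x : S n) (a : Fin n),
        (sphereMap g x : E n) a = if a = b then -((x : E n) a) else (x : E n) a := by
      intro x a
      show (g (x : E n)) a = _
      rw [hg, LinearIsometryEquiv.piLpCongrRight_apply]
      by_cases hab : a = b
      · subst hab; simp
      · simp [hab]
    have key : ∀ x : S n,
        (∏ a, ((sphereMap g x : E n) a) ^ (e a)) = - ∏ a, ((x : E n) a) ^ (e a) := by
      intro x
      rw [← Finset.prod_erase_mul _ _ (Finset.mem_univ b),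
        ← Finset.prod_erase_mul _ _ (Finset.mem_univ b)]
      rw [Finset.prod_congr rfl (fun a ha => by
        rw [hcoord, if_neg (Finset.ne_of_mem_erase ha)])]
      rw [hcoord, if_pos rfl, hb.neg_pow, mul_neg]
    have h2 : ∫ x : S n, ∏ a, ((x : E n) a) ^ (e a) ∂(sphereUniform n)
        = - ∫ x : S n, ∏ a, ((x : E n) a) ^ (e a) ∂(sphereUniform n) := by
      conv_lhs => rw [← (measurePreserving_sphereUniform g).integral_comp
        (measurableEmbedding_sphereMap g) (fun x : S n => ∏ a, ((x : E n) a) ^ (e a))]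
      simp_rw [key]
      rw [integral_neg]
    have : (2:ℝ) * ∫ x : S n, ∏ a, ((x : E n) a) ^ (e a) ∂(sphereUniform n) = 0 := by
      linarith [h2]
    have := mul_eq_zero.1 this
    rcases this with h | h
    · norm_num at h
    · rw [h]


section PiProd

variable {X : Type*} [MeasurableSpace X]

lemma insertNth_zero_eq_cons {M : ℕ} (v : X) (f : Fin M → X) :
    (Fin.insertNthEquiv (fun _ => X) 0) (v, f) = Fin.cons v f := by
  rw [Fin.insertNthEquiv_zero]; rfl

lemma piFinSuccAbove_symm_eq_cons {M : ℕ} (p : X × (Fin M → X)) :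
    (MeasurableEquiv.piFinSuccAbove (fun _ : Fin (M+1) => X) 0).symm p
      = Fin.cons p.1 p.2 := by
  show (Fin.insertNthEquiv (fun _ => X) 0) p = _
  rw [← insertNth_zero_eq_cons p.1 p.2]

theorem integrable_pi_prod {M : ℕ} (μ : Measure X) [IsProbabilityMeasure μ]
    (g : Fin M → X → ℝ) (hg : ∀ k, Integrable (g k) μ) :
    Integrable (fun σ : Fin M → X => ∏ k, g k (σ k)) (Measure.pi fun _ => μ) := by
  induction M with
  | zero =>
    simp only [Finset.univ_eq_empty, Finset.prod_empty]
    exact integrable_const 1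
  | succ M ih =>
    have h0 := (measurePreserving_piFinSuccAbove (fun _ : Fin (M+1) => μ) 0).symm
    rw [← h0.integrable_comp_emb (MeasurableEquiv.measurableEmbedding _)]
    have heq : ((fun σ : Fin (M+1) → X => ∏ k, g k (σ k))
          ∘ ((MeasurableEquiv.piFinSuccAbove (fun _ : Fin (M+1) => X) 0).symm))
        = fun p : X × (Fin M → X) => g 0 p.1 * ∏ k : Fin M, g k.succ (p.2 k) := by
      funext p
      show (∏ k, g k ((MeasurableEquiv.piFinSuccAbove (fun _ : Fin (M+1) => X) 0).symm p k)) = _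
      rw [piFinSuccAbove_symm_eq_cons, Fin.prod_univ_succ]
      simp
    rw [heq]
    exact (hg 0).mul_prod (ih _ (fun k => hg k.succ))

theorem integral_pi_prod {M : ℕ} (μ : Measure X) [IsProbabilityMeasure μ]
    (g : Fin M → X → ℝ) :
    ∫ σ : Fin M → X, ∏ k, g k (σ k) ∂(Measure.pi fun _ => μ)
      = ∏ k, ∫ x, g k x ∂μ := by
  induction M with
  | zero => simp
  | succ M ih =>
    have h0 := (measurePreserving_piFinSuccAbove (fun _ : Fin (M+1) => μ) 0).symm
    rw [← h0.integral_comp' (fun σ : Fin (M+1) → X => ∏ k, g k (σ k))]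
    have heq : ∀ p : X × (Fin M → X),
        (∏ k, g k ((MeasurableEquiv.piFinSuccAbove (fun _ : Fin (M+1) => X) 0).symm p k))
        = g 0 p.1 * ∏ k : Fin M, g k.succ (p.2 k) := by
      intro p
      rw [piFinSuccAbove_symm_eq_cons, Fin.prod_univ_succ]
      simp
    rw [MeasureTheory.integral_congr_ae (ae_of_all _ heq), integral_prod_mul
      (μ := μ) (ν := Measure.pi fun _ : Fin M => μ) (f := g 0)
      (g := fun σ' : Fin M → X => ∏ k : Fin M, g k.succ (σ' k)),
      ih (fun k => g k.succ), Fin.prod_univ_succ]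

end PiProd

section Monomial

variable {n M : ℕ}

/-- a monomial in the coordinates of the spins -/
noncomputable def Mon {N : ℕ} (e : Fin N × Fin n → ℕ) (τ : Fin N → S n) : ℝ :=
  ∏ q : Fin N × Fin n, ((τ q.1 : E n) q.2) ^ (e q)

lemma Mon_add {N : ℕ} (e e' : Fin N × Fin n → ℕ) (τ : Fin N → S n) :
    Mon (e + e') τ = Mon e τ * Mon e' τ := by
  rw [Mon, Mon, Mon, ← Finset.prod_mul_distrib]
  exact Finset.prod_congr rfl fun q _ => by rw [Pi.add_apply, pow_add]

lemma Mon_single {N : ℕ} (q0 : Fin N × Fin n) (τ : Fin N → S n) :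
    Mon (fun q => if q = q0 then 1 else 0) τ = (τ q0.1 : E n) q0.2 := by
  rw [Mon]
  rw [Finset.prod_congr rfl (fun q _ => by
    show ((τ q.1 : E n) q.2) ^ (if q = q0 then 1 else 0)
      = if q = q0 then (τ q.1 : E n) q.2 else 1
    split_ifs <;> simp)]
  simp [Finset.prod_ite_eq' Finset.univ q0]

lemma Mon_cons_eq (e : Fin (M+1) × Fin n → ℕ) (v : S n) (σ' : Fin M → S n) :
    Mon e (Fin.cons v σ')
      = (∏ a, ((v : E n) a) ^ (e (0, a)))
        * ∏ k : Fin M, (∏ a, ((σ' k : E n) a) ^ (e (k.succ, a))) := by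
  rw [Mon, Fintype.prod_prod_type]
  rw [Fin.prod_univ_succ]
  simp

lemma integrable_Mon_cons (hn : 1 ≤ n) (e : Fin (M+1) × Fin n → ℕ) (v : S n) :
    Integrable (fun σ' : Fin M → S n => Mon e (Fin.cons v σ'))
      (Measure.pi fun _ => sphereUniform n) := by
  haveI := isProbabilityMeasure_sphereUniform hn
  simp_rw [Mon_cons_eq]
  exact (integrable_pi_prod (sphereUniform n) _
    (fun k => integrable_sphere_monomial hn (fun a => e (k.succ, a)))).const_mul _

lemma integral_Mon_cons_nonneg (hn : 1 ≤ n) (e : Fin (M+1) × Fin n → ℕ) (v : S n)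
    (hv : ∀ a, 0 ≤ (v : E n) a) :
    0 ≤ ∫ σ' : Fin M → S n, Mon e (Fin.cons v σ')
        ∂(Measure.pi fun _ => sphereUniform n) := by
  haveI := isProbabilityMeasure_sphereUniform hn
  simp_rw [Mon_cons_eq]
  rw [MeasureTheory.integral_const_mul]
  have hfac := integral_pi_prod (X := S n) (sphereUniform n)
      (fun k (x : S n) => ∏ a, ((x : E n) a) ^ (e (k.succ, a)))
  simp only at hfac ⊢
  rw [hfac]
  refine mul_nonneg (Finset.prod_nonneg fun a _ => pow_nonneg (hv a) _) ?_
  exact Finset.prod_nonneg fun k _ => sphere_moment_nonneg hn _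

/-- `G` is a nonnegative combination of monomials evaluated at `Fin.cons v ·` -/
def GoodRep (v : S n) (G : (Fin M → S n) → ℝ) : Prop :=
  ∃ (ι : Type) (s : Finset ι) (c : ι → ℝ) (e : ι → Fin (M+1) × Fin n → ℕ),
    (∀ i ∈ s, 0 ≤ c i) ∧ ∀ σ', G σ' = ∑ i ∈ s, c i * Mon (e i) (Fin.cons v σ')

lemma GoodRep.congr {v : S n} {G G' : (Fin M → S n) → ℝ}
    (h : ∀ σ', G σ' = G' σ') (hG : GoodRep v G') : GoodRep v G := by
  obtain ⟨ι, s, c, e, hc, he⟩ := hG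
  exact ⟨ι, s, c, e, hc, fun σ' => (h σ').trans (he σ')⟩

lemma GoodRep.const (v : S n) {c : ℝ} (hc : 0 ≤ c) :
    GoodRep v (fun _ : Fin M → S n => c) := by
  refine ⟨Unit, Finset.univ, fun _ => c, fun _ => 0, fun _ _ => hc, fun σ' => ?_⟩
  have : Mon (0 : Fin (M+1) × Fin n → ℕ) (Fin.cons v σ') = 1 := by
    rw [Mon]; simp
  simp [this]

lemma GoodRep.mul {v : S n} {G G' : (Fin M → S n) → ℝ}
    (hG : GoodRep v G) (hG' : GoodRep v G') : GoodRep v (fun σ' => G σ' * G' σ') := by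
  obtain ⟨ι, s, c, e, hc, he⟩ := hG
  obtain ⟨ι', s', c', e', hc', he'⟩ := hG'
  refine ⟨ι × ι', s ×ˢ s', fun i => c i.1 * c' i.2, fun i => e i.1 + e' i.2,
    fun i hi => mul_nonneg (hc _ (Finset.mem_product.1 hi).1)
      (hc' _ (Finset.mem_product.1 hi).2), fun σ' => ?_⟩
  show G σ' * G' σ' = _
  rw [he, he', Finset.sum_mul_sum, Finset.sum_product]
  refine Finset.sum_congr rfl fun i _ => Finset.sum_congr rfl fun i' _ => ?_
  rw [Mon_add]; ring

lemma GoodRep.pow {v : S n} {G : (Fin M → S n) → ℝ} (hG : GoodRep v G) (p : ℕ) :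
    GoodRep v (fun σ' => G σ' ^ p) := by
  induction p with
  | zero => exact GoodRep.congr (fun σ' => by rw [pow_zero]) (GoodRep.const v zero_le_one)
  | succ p ih =>
    exact GoodRep.congr (fun σ' => by rw [pow_succ]) (GoodRep.mul ih hG)

lemma GoodRep.prod {v : S n} {P : Type*} (s : Finset P) (f : P → (Fin M → S n) → ℝ)
    (h : ∀ p ∈ s, GoodRep v (f p)) :
    GoodRep v (fun σ' => ∏ p ∈ s, f p σ') := by
  induction s using Finset.cons_induction with
  | empty => exact GoodRep.congr (fun σ' => by simp) (GoodRep.const v zero_le_one)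
  | cons p s hp ih =>
    refine GoodRep.congr (fun σ' => Finset.prod_cons hp) ?_
    exact GoodRep.mul (h p (Finset.mem_cons_self p s))
      (ih fun q hq => h q (Finset.mem_cons_of_mem hq))

lemma GoodRep.pairSum {v : S n} (k l : Fin (M+1)) (t : Finset (Fin n)) :
    GoodRep v (fun σ' => ∑ a ∈ t,
      (((Fin.cons v σ' : Fin (M+1) → S n) k : E n) a)
        * (((Fin.cons v σ' : Fin (M+1) → S n) l : E n) a)) := by
  refine ⟨Fin n, t, fun _ => 1, fun a q =>
    (if q = (k, a) then 1 else 0) + (if q = (l, a) then 1 else 0),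
    fun _ _ => zero_le_one, fun σ' => ?_⟩
  refine Finset.sum_congr rfl fun a _ => ?_
  rw [one_mul]
  show _ = Mon (fun q => (if q = ((k : Fin (M+1)), a) then 1 else 0)
    + (if q = ((l : Fin (M+1)), a) then 1 else 0)) (Fin.cons v σ')
  have : (fun q => (if q = ((k : Fin (M+1)), a) then 1 else 0)
      + (if q = ((l : Fin (M+1)), a) then 1 else 0))
      = (fun q => if q = ((k : Fin (M+1)), a) then 1 else 0)
        + (fun q => if q = ((l : Fin (M+1)), a) then 1 else 0) := rfl
  rw [this, Mon_add, Mon_single, Mon_single]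

lemma GoodRep.integral_nonneg (hn : 1 ≤ n) {v : S n} {G : (Fin M → S n) → ℝ}
    (hG : GoodRep v G) (hv : ∀ a, 0 ≤ (v : E n) a) :
    0 ≤ ∫ σ' : Fin M → S n, G σ' ∂(Measure.pi fun _ => sphereUniform n) := by
  obtain ⟨ι, s, c, e, hc, he⟩ := hG
  rw [MeasureTheory.integral_congr_ae (ae_of_all _ he), integral_finset_sum _
    (fun i _ => (integrable_Mon_cons hn (e i) v).const_mul _)]
  refine Finset.sum_nonneg fun i hi => ?_
  rw [MeasureTheory.integral_const_mul]
  exact mul_nonneg (hc i hi) (integral_Mon_cons_nonneg hn (e i) v hv)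

end Monomial

section Main

variable {n M : ℕ}

lemma inner_eq (x y : E n) : (⟪x, y⟫ : ℝ) = ∑ a, x a * y a := by
  simp [PiLp.inner_apply, RCLike.inner_apply]
  exact Finset.sum_congr rfl fun _ _ => mul_comm _ _

/-- the first standard basis vector, as an element of the sphere -/
noncomputable def e1 (hn : 1 ≤ n) : S n :=
  ⟨EuclideanSpace.single ⟨0, hn⟩ (1:ℝ), by
    rw [mem_sphere_zero_iff_norm, EuclideanSpace.norm_single, norm_one]⟩

lemma e1_coord_nonneg (hn : 1 ≤ n) (a : Fin n) : 0 ≤ ((e1 hn : S n) : E n) a := by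
  show (0:ℝ) ≤ EuclideanSpace.single ⟨0, hn⟩ (1:ℝ) a
  rw [EuclideanSpace.single_apply]
  split_ifs <;> norm_num

lemma inner_e1_right (hn : 1 ≤ n) (x : E n) :
    (⟪x, ((e1 hn : S n) : E n)⟫ : ℝ) = x ⟨0, hn⟩ := by
  show (⟪x, EuclideanSpace.single ⟨0, hn⟩ (1:ℝ)⟫ : ℝ) = x ⟨0, hn⟩
  rw [EuclideanSpace.inner_single_right]
  simp

lemma inner_e1_left (hn : 1 ≤ n) (x : E n) :
    (⟪((e1 hn : S n) : E n), x⟫ : ℝ) = x ⟨0, hn⟩ := by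
  rw [real_inner_comm]; exact inner_e1_right hn x

lemma bracket_eq (hn : 1 ≤ n) (τ : Fin (M+1) → S n) (h0 : τ 0 = e1 hn) (i j : Fin (M+1)) :
    (⟪(τ i : E n), (τ j : E n)⟫ : ℝ)
      - ⟪(τ i : E n), (τ 0 : E n)⟫ * ⟪(τ 0 : E n), (τ j : E n)⟫
    = ∑ a ∈ Finset.univ.erase ⟨0, hn⟩, (τ i : E n) a * (τ j : E n) a := by
  rw [h0, inner_e1_right hn, inner_e1_left hn, inner_eq,
    ← Finset.sum_erase_add Finset.univ _ (Finset.mem_univ (⟨0, hn⟩ : Fin n))]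
  ring

lemma abs_inner_le_one (x y : S n) : |(⟪(x : E n), (y : E n)⟫ : ℝ)| ≤ 1 := by
  calc |(⟪(x : E n), (y : E n)⟫ : ℝ)| ≤ ‖(x : E n)‖ * ‖(y : E n)‖ := abs_real_inner_le_norm _ _
    _ = 1 := by
        rw [mem_sphere_zero_iff_norm.1 x.2, mem_sphere_zero_iff_norm.1 y.2, one_mul]

end Main

end SpinProof

open SpinProof

/-- The integral `J = ∫ [σ_i · (I − P_{σ₁}) σ_j] ∏_{l<k} (σ_l·σ_k)^{n_{lk}} dσ₁⋯dσ_N`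
is nonnegative, where `σ_i · (I − P_{σ₁}) σ_j = σ_i·σ_j − (σ_i·σ₁)(σ₁·σ_j)`.
(Here the first spin `σ₁` is `σ ⟨0, _⟩`.) -/
theorem projected_integral_nonneg (n N : ℕ) (hn : 2 ≤ n) (hN : 1 ≤ N)
    (i j : Fin N) (m : Fin N → Fin N → ℕ) :
    0 ≤ ∫ σ : Fin N → Metric.sphere (0 : EuclideanSpace ℝ (Fin n)) 1,
        ((⟪(σ i : EuclideanSpace ℝ (Fin n)), (σ j : EuclideanSpace ℝ (Fin n))⟫ : ℝ)
          - (⟪(σ i : EuclideanSpace ℝ (Fin n)), (σ ⟨0, hN⟩ : EuclideanSpace ℝ (Fin n))⟫ : ℝ)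
            * (⟪(σ ⟨0, hN⟩ : EuclideanSpace ℝ (Fin n)), (σ j : EuclideanSpace ℝ (Fin n))⟫ : ℝ))
        * ∏ p ∈ Finset.univ.filter (fun p : Fin N × Fin N => p.1 < p.2),
            (⟪(σ p.1 : EuclideanSpace ℝ (Fin n)), (σ p.2 : EuclideanSpace ℝ (Fin n))⟫ : ℝ)
              ^ m p.1 p.2
      ∂(spinMeasure n N) := by
  have hn1 : 1 ≤ n := le_trans one_le_two hn
  haveI := isProbabilityMeasure_sphereUniform hn1
  obtain ⟨M, rfl⟩ : ∃ M, N = M + 1 := ⟨N - 1, by omega⟩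
  haveI : IsProbabilityMeasure (spinMeasure n (M+1)) := by
    unfold spinMeasure; infer_instance
  have h0 : (⟨0, hN⟩ : Fin (M+1)) = 0 := by ext; simp
  simp only [h0]
  set F : (Fin (M+1) → S n) → ℝ := fun σ =>
    ((⟪(σ i : E n), (σ j : E n)⟫ : ℝ)
      - (⟪(σ i : E n), (σ 0 : E n)⟫ : ℝ) * (⟪(σ 0 : E n), (σ j : E n)⟫ : ℝ))
    * ∏ p ∈ Finset.univ.filter (fun p : Fin (M+1) × Fin (M+1) => p.1 < p.2),
        (⟪(σ p.1 : E n), (σ p.2 : E n)⟫ : ℝ) ^ m p.1 p.2 with hF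
  show 0 ≤ ∫ σ, F σ ∂(spinMeasure n (M+1))
  -- continuity
  have hci : ∀ k : Fin (M+1), Continuous (fun σ : Fin (M+1) → S n => (σ k : E n)) :=
    fun k => continuous_subtype_val.comp (continuous_apply k)
  have hinner : ∀ k l : Fin (M+1),
      Continuous (fun σ : Fin (M+1) → S n => (⟪(σ k : E n), (σ l : E n)⟫ : ℝ)) :=
    fun k l => Continuous.inner (hci k) (hci l)
  have hcont : Continuous F :=
    (((hinner i j).sub ((hinner i 0).mul (hinner 0 j))).mul
      (continuous_finset_prod _ fun p _ => (hinner p.1 p.2).pow _))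
  -- boundedness
  have hFbound : ∀ σ, |F σ| ≤ 2 := by
    intro σ
    rw [hF, abs_mul]
    have h1 : |(⟪(σ i : E n), (σ j : E n)⟫ : ℝ)
        - (⟪(σ i : E n), (σ 0 : E n)⟫ : ℝ) * (⟪(σ 0 : E n), (σ j : E n)⟫ : ℝ)| ≤ 2 := by
      have a1 := abs_inner_le_one (σ i) (σ j)
      have a2 := abs_inner_le_one (σ i) (σ 0)
      have a3 := abs_inner_le_one (σ 0) (σ j)
      calc |(⟪(σ i : E n), (σ j : E n)⟫ : ℝ)
          - (⟪(σ i : E n), (σ 0 : E n)⟫ : ℝ) * (⟪(σ 0 : E n), (σ j : E n)⟫ : ℝ)|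
          ≤ |(⟪(σ i : E n), (σ j : E n)⟫ : ℝ)|
            + |(⟪(σ i : E n), (σ 0 : E n)⟫ : ℝ) * (⟪(σ 0 : E n), (σ j : E n)⟫ : ℝ)| :=
            abs_sub _ _
        _ ≤ 2 := by
            rw [abs_mul]
            nlinarith [abs_nonneg ((⟪(σ i : E n), (σ 0 : E n)⟫ : ℝ)),
              abs_nonneg ((⟪(σ 0 : E n), (σ j : E n)⟫ : ℝ))]
    have h2 : |∏ p ∈ Finset.univ.filter (fun p : Fin (M+1) × Fin (M+1) => p.1 < p.2),
        (⟪(σ p.1 : E n), (σ p.2 : E n)⟫ : ℝ) ^ m p.1 p.2| ≤ 1 := by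
      rw [Finset.abs_prod]
      refine Finset.prod_le_one (fun p _ => abs_nonneg _) (fun p _ => ?_)
      rw [abs_pow]
      exact pow_le_one₀ (abs_nonneg _) (abs_inner_le_one (σ p.1) (σ p.2))
    calc |(⟪(σ i : E n), (σ j : E n)⟫ : ℝ)
          - (⟪(σ i : E n), (σ 0 : E n)⟫ : ℝ) * (⟪(σ 0 : E n), (σ j : E n)⟫ : ℝ)|
          * |∏ p ∈ Finset.univ.filter (fun p : Fin (M+1) × Fin (M+1) => p.1 < p.2),
              (⟪(σ p.1 : E n), (σ p.2 : E n)⟫ : ℝ) ^ m p.1 p.2|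
        ≤ 2 * 1 := mul_le_mul h1 h2 (abs_nonneg _) (by norm_num)
      _ = 2 := by norm_num
  have hFint : Integrable F (spinMeasure n (M+1)) :=
    (integrable_const (2:ℝ)).mono' hcont.aestronglyMeasurable
      (ae_of_all _ fun σ => by rw [Real.norm_eq_abs]; exact hFbound σ)
  -- invariance of F under isometries applied to all spins
  have hinv : ∀ (g : E n ≃ₗᵢ[ℝ] E n) (τ : Fin (M+1) → S n),
      F (fun k => sphereMap g (τ k)) = F τ := by
    intro g τ
    rw [hF]
    simp only [sphereMap_coe, LinearIsometryEquiv.inner_map_map]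
  -- Fubini: split off the first spin
  have hMP := (measurePreserving_piFinSuccAbove
    (fun _ : Fin (M+1) => sphereUniform n) 0).symm
  rw [show spinMeasure n (M+1) = Measure.pi fun _ : Fin (M+1) => sphereUniform n from rfl,
    ← hMP.integral_comp' F]
  have hcomp : ∀ p : S n × (Fin M → S n),
      F ((MeasurableEquiv.piFinSuccAbove (fun _ : Fin (M+1) => S n) 0).symm p)
        = F (Fin.cons p.1 p.2) := fun p => by rw [piFinSuccAbove_symm_eq_cons]
  rw [MeasureTheory.integral_congr_ae (ae_of_all _ hcomp)]
  have hint2 : Integrable (fun p : S n × (Fin M → S n) => F (Fin.cons p.1 p.2))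
      ((sphereUniform n).prod (Measure.pi fun _ : Fin M => sphereUniform n)) := by
    have := (hMP.integrable_comp_emb (MeasurableEquiv.measurableEmbedding _)).2 hFint
    refine this.congr (ae_of_all _ fun p => ?_)
    exact hcomp p
  rw [MeasureTheory.integral_prod _ hint2]
  -- the inner integral does not depend on the first spin
  have hconst : ∀ v : S n,
      (∫ σ' : Fin M → S n, F (Fin.cons v σ') ∂(Measure.pi fun _ : Fin M => sphereUniform n))
        = ∫ σ' : Fin M → S n, F (Fin.cons (e1 hn1) σ')
            ∂(Measure.pi fun _ : Fin M => sphereUniform n) := by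
    intro v
    obtain ⟨g, hg⟩ : ∃ g : E n ≃ₗᵢ[ℝ] E n, g ((e1 hn1 : S n) : E n) = (v : E n) := by
      refine ⟨Submodule.reflection (ℝ ∙ (((e1 hn1 : S n) : E n) - (v : E n)))ᗮ, Submodule.reflection_sub ?_⟩
      rw [mem_sphere_zero_iff_norm.1 (e1 hn1).2, mem_sphere_zero_iff_norm.1 v.2]
    have hg' : sphereMap g (e1 hn1) = v := Subtype.ext hg
    have hmp2 : MeasurePreserving (fun σ' : Fin M → S n => fun k => sphereMap g (σ' k))
        (Measure.pi fun _ : Fin M => sphereUniform n)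
        (Measure.pi fun _ : Fin M => sphereUniform n) :=
      measurePreserving_pi _ _ (fun _ => measurePreserving_sphereUniform g)
    have hemb : MeasurableEmbedding (fun σ' : Fin M → S n => fun k => sphereMap g (σ' k)) :=
      (MeasurableEquiv.piCongrRight
        (fun _ : Fin M => (sphereHomeo g).toMeasurableEquiv)).measurableEmbedding
    rw [← hmp2.integral_comp hemb (fun σ' => F (Fin.cons v σ'))]
    refine MeasureTheory.integral_congr_ae (ae_of_all _ fun σ' => ?_)
    have hcc : (fun k => sphereMap g ((Fin.cons (e1 hn1) σ' : Fin (M+1) → S n) k))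
        = Fin.cons (sphereMap g (e1 hn1)) (fun k => sphereMap g (σ' k)) := by
      funext k
      induction k using Fin.cases with
      | zero => simp
      | succ k => simp
    calc F (Fin.cons v (fun k => sphereMap g (σ' k)))
        = F (fun k => sphereMap g ((Fin.cons (e1 hn1) σ' : Fin (M+1) → S n) k)) := by
          rw [hcc, hg']
      _ = F (Fin.cons (e1 hn1) σ') := hinv g _
  rw [MeasureTheory.integral_congr_ae (ae_of_all _ hconst), integral_const, probReal_univ,
    one_smul]
  -- positivity of the remaining integral via the positive-combination representation
  have hgood : GoodRep (e1 hn1) (fun σ' : Fin M → S n => F (Fin.cons (e1 hn1) σ')) := by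
    have hbr : GoodRep (e1 hn1) (fun σ' : Fin M → S n =>
        (⟪((Fin.cons (e1 hn1) σ' : Fin (M+1) → S n) i : E n),
          ((Fin.cons (e1 hn1) σ' : Fin (M+1) → S n) j : E n)⟫ : ℝ)
        - (⟪((Fin.cons (e1 hn1) σ' : Fin (M+1) → S n) i : E n),
            ((Fin.cons (e1 hn1) σ' : Fin (M+1) → S n) 0 : E n)⟫ : ℝ)
          * (⟪((Fin.cons (e1 hn1) σ' : Fin (M+1) → S n) 0 : E n),
              ((Fin.cons (e1 hn1) σ' : Fin (M+1) → S n) j : E n)⟫ : ℝ)) := by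
      refine GoodRep.congr (fun σ' => ?_) (GoodRep.pairSum i j (Finset.univ.erase ⟨0, hn1⟩))
      exact bracket_eq hn1 _ (by simp) i j
    have hpr : GoodRep (e1 hn1) (fun σ' : Fin M → S n =>
        ∏ p ∈ Finset.univ.filter (fun p : Fin (M+1) × Fin (M+1) => p.1 < p.2),
          (⟪((Fin.cons (e1 hn1) σ' : Fin (M+1) → S n) p.1 : E n),
            ((Fin.cons (e1 hn1) σ' : Fin (M+1) → S n) p.2 : E n)⟫ : ℝ) ^ m p.1 p.2) := by
      refine GoodRep.prod _ _ (fun p _ => ?_)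
      refine GoodRep.congr (fun σ' => ?_) ((GoodRep.pairSum p.1 p.2 Finset.univ).pow (m p.1 p.2))
      rw [inner_eq]
    exact GoodRep.congr (fun σ' => rfl) (GoodRep.mul hbr hpr)
  exact hgood.integral_nonneg hn1 (e1_coord_nonneg hn1)
end

section
/- Let n ≥ 2, M ≥ 1, and nonnegative integers n_1,…,n_M. There exists a polynomial Q in the variables (y_{ij})_{1≤i≤j≤M} with nonnegative real coefficients such that for all a_1,…,a_M ∈ ℝ^n, ∫_{S^{n-1}} ∏_{k=1}^M (σ·a_k)^{n_k} dσ = Q((a_i·a_j)_{1≤i≤j≤M}). That is, the spherical average of a product of powers of linear forms is a nonnegative combination of monomials in the pairwise inner products of the vectors a_k. -/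
open MeasureTheory RealInnerProductSpace

namespace SpherePoly

open Real Filter MvPolynomial Finset

noncomputable def Mo (k : ℕ) : ℝ := ∫ x : ℝ, x ^ k * Real.exp (-(2⁻¹ : ℝ) * x ^ 2)




/-- unnormalized 1-D Gaussian moment -/

lemma integrable_mo (k : ℕ) :
    Integrable (fun x : ℝ => x ^ k * Real.exp (-(2⁻¹ : ℝ) * x ^ 2)) := by
  have h := integrable_rpow_mul_exp_neg_mul_sq (b := (2⁻¹ : ℝ)) (by norm_num)
    (s := (k : ℝ)) (lt_of_lt_of_le (by norm_num) (Nat.cast_nonneg k))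
  simpa [Real.rpow_natCast] using h

lemma tendsto_pow_exp_atTop (k : ℕ) :
    Tendsto (fun x : ℝ => x ^ k * Real.exp (-(2⁻¹ : ℝ) * x ^ 2)) atTop (nhds 0) := by
  have h := rpow_mul_exp_neg_mul_sq_isLittleO_exp_neg (b := (2⁻¹ : ℝ)) (by norm_num) (k : ℝ)
  have h2 : Tendsto (fun x : ℝ => Real.exp (-(1/2) * x)) atTop (nhds 0) := by
    have h3 : Tendsto (fun x : ℝ => (1/2) * x) atTop atTop :=
      Tendsto.const_mul_atTop (by norm_num) tendsto_id
    have := Real.tendsto_exp_neg_atTop_nhds_zero.comp h3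
    simpa [Function.comp_def, neg_mul] using this
  have := h.trans_tendsto h2
  simpa [Real.rpow_natCast] using this

lemma tendsto_pow_exp_atBot (k : ℕ) :
    Tendsto (fun x : ℝ => x ^ k * Real.exp (-(2⁻¹ : ℝ) * x ^ 2)) atBot (nhds 0) := by
  have h := ((tendsto_pow_exp_atTop k).const_mul ((-1 : ℝ) ^ k)).comp tendsto_neg_atBot_atTop
  rw [mul_zero] at h
  refine h.congr (fun x => ?_)
  simp only [Function.comp_def, neg_sq]
  rw [← mul_assoc, ← mul_pow]
  ring_nf






lemma hasDerivAt_aux (k : ℕ) (x : ℝ) :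
    HasDerivAt (fun x : ℝ => x ^ (k + 1) * Real.exp (-(2⁻¹ : ℝ) * x ^ 2))
      ((k + 1 : ℝ) * x ^ k * Real.exp (-(2⁻¹ : ℝ) * x ^ 2)
        - x ^ (k + 2) * Real.exp (-(2⁻¹ : ℝ) * x ^ 2)) x := by
  have h1 : HasDerivAt (fun x : ℝ => x ^ (k + 1)) ((k + 1 : ℝ) * x ^ k) x := by
    simpa using hasDerivAt_pow (k + 1) x
  have h2 : HasDerivAt (fun x : ℝ => -(2⁻¹ : ℝ) * x ^ 2) (-(2⁻¹ : ℝ) * (2 * x)) x := by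
    simpa using (hasDerivAt_pow 2 x).const_mul (-(2⁻¹ : ℝ))
  have h3 := h2.exp
  have := h1.mul h3
  refine this.congr_deriv ?_
  ring

lemma integral_deriv_aux (k : ℕ) :
    ∫ x : ℝ, ((k + 1 : ℝ) * x ^ k * Real.exp (-(2⁻¹ : ℝ) * x ^ 2)
      - x ^ (k + 2) * Real.exp (-(2⁻¹ : ℝ) * x ^ 2)) = 0 := by
  set f' : ℝ → ℝ := fun x => (k + 1 : ℝ) * x ^ k * Real.exp (-(2⁻¹ : ℝ) * x ^ 2)
      - x ^ (k + 2) * Real.exp (-(2⁻¹ : ℝ) * x ^ 2) with hf'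
  have hint : Integrable f' := by
    apply Integrable.sub
    · simpa [mul_assoc] using ((integrable_mo k).const_mul ((k:ℝ) + 1))
    · exact integrable_mo (k + 2)
  have hIoi : ∫ x in Set.Ioi (0:ℝ), f' x = 0 := by
    have := integral_Ioi_of_hasDerivAt_of_tendsto'
      (f := fun x : ℝ => x ^ (k + 1) * Real.exp (-(2⁻¹ : ℝ) * x ^ 2)) (f' := f')
      (a := 0) (fun x _ => hasDerivAt_aux k x) hint.integrableOn (tendsto_pow_exp_atTop (k+1))
    simpa using this
  have hIic : ∫ x in Set.Iic (0:ℝ), f' x = 0 := by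
    have := integral_Iic_of_hasDerivAt_of_tendsto'
      (f := fun x : ℝ => x ^ (k + 1) * Real.exp (-(2⁻¹ : ℝ) * x ^ 2)) (f' := f')
      (a := 0) (fun x _ => hasDerivAt_aux k x) hint.integrableOn (tendsto_pow_exp_atBot (k+1))
    simpa using this
  have := integral_add_compl (measurableSet_Iic (a := (0:ℝ))) hint
  rw [Set.compl_Iic] at this
  rw [← this, hIic, hIoi]
  norm_num

lemma mo_rec (k : ℕ) : Mo (k + 2) = (k + 1 : ℝ) * Mo k := by
  have h := integral_deriv_aux k
  rw [integral_sub (by simpa [mul_assoc] using ((integrable_mo k).const_mul ((k:ℝ) + 1)))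
    (integrable_mo (k + 2))] at h
  have h2 : ∫ x : ℝ, (k + 1 : ℝ) * x ^ k * Real.exp (-(2⁻¹ : ℝ) * x ^ 2)
      = (k + 1 : ℝ) * Mo k := by
    rw [Mo, ← MeasureTheory.integral_const_mul]
    congr 1; ext x; ring
  rw [h2] at h
  have : Mo (k + 2) = ∫ x : ℝ, x ^ (k+2) * Real.exp (-(2⁻¹ : ℝ) * x ^ 2) := rfl
  linarith

lemma mo_one : Mo 1 = 0 := by
  have hd : ∀ x : ℝ, HasDerivAt (fun x : ℝ => -Real.exp (-(2⁻¹ : ℝ) * x ^ 2))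
      (x ^ 1 * Real.exp (-(2⁻¹ : ℝ) * x ^ 2)) x := by
    intro x
    have h2 : HasDerivAt (fun x : ℝ => -(2⁻¹ : ℝ) * x ^ 2) (-(2⁻¹ : ℝ) * (2 * x)) x := by
      simpa using (hasDerivAt_pow 2 x).const_mul (-(2⁻¹ : ℝ))
    have := h2.exp.neg
    refine this.congr_deriv ?_
    ring
  have htop : Tendsto (fun x : ℝ => -Real.exp (-(2⁻¹ : ℝ) * x ^ 2)) atTop (nhds 0) := by
    simpa using (tendsto_pow_exp_atTop 0).neg
  have hbot : Tendsto (fun x : ℝ => -Real.exp (-(2⁻¹ : ℝ) * x ^ 2)) atBot (nhds 0) := by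
    simpa using (tendsto_pow_exp_atBot 0).neg
  have hIoi := integral_Ioi_of_hasDerivAt_of_tendsto' (a := 0)
    (fun x _ => hd x) (integrable_mo 1).integrableOn htop
  have hIic := integral_Iic_of_hasDerivAt_of_tendsto' (a := 0)
    (fun x _ => hd x) (integrable_mo 1).integrableOn hbot
  have := integral_add_compl (measurableSet_Iic (a := (0:ℝ))) (integrable_mo 1)
  rw [Set.compl_Iic] at this
  rw [Mo] at *
  rw [← this, hIic, hIoi]
  norm_num

lemma mo_zero_pos : 0 < Mo 0 := by
  have : Mo 0 = Real.sqrt (π / 2⁻¹) := by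
    rw [Mo, ← integral_gaussian (2⁻¹ : ℝ)]
    simp
  rw [this]
  positivity

lemma mo_nonneg (k : ℕ) : 0 ≤ Mo k := by
  induction k using Nat.strong_induction_on with
  | _ k ih =>
    match k with
    | 0 => exact mo_zero_pos.le
    | 1 => exact mo_one.ge
    | (k + 2) =>
      rw [mo_rec]
      exact mul_nonneg (by positivity) (ih k (by omega))

lemma mo_succ (k : ℕ) : Mo (k + 1) = (k : ℝ) * Mo (k - 1) := by
  match k with
  | 0 => simpa using mo_one
  | (k + 1) => simpa using mo_rec k





variable {n : ℕ}

/-- Gaussian weight as a product over coordinates. -/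
noncomputable def gw (x : Fin n → ℝ) : ℝ := ∏ i, Real.exp (-(2⁻¹ : ℝ) * x i ^ 2)

lemma monomial_gw_eq (d : Fin n →₀ ℕ) (c : ℝ) (x : Fin n → ℝ) :
    eval x (monomial d c) * gw x = c * ∏ i, (x i ^ d i * Real.exp (-(2⁻¹ : ℝ) * x i ^ 2)) := by
  rw [eval_monomial, gw, Finsupp.prod_pow, Finset.prod_mul_distrib, mul_assoc]

lemma integrable_monomial_gw (d : Fin n →₀ ℕ) (c : ℝ) :
    Integrable (fun x : Fin n → ℝ => eval x (monomial d c) * gw x) := by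
  simp only [monomial_gw_eq]
  exact (Integrable.fintype_prod (f := fun i (t : ℝ) => t ^ d i * Real.exp (-(2⁻¹ : ℝ) * t ^ 2))
    (fun i => integrable_mo (d i))).const_mul c

lemma integrable_gw (p : MvPolynomial (Fin n) ℝ) :
    Integrable (fun x : Fin n → ℝ => eval x p * gw x) := by
  have : (fun x : Fin n → ℝ => eval x p * gw x)
      = fun x => ∑ v ∈ p.support, eval x (monomial v (coeff v p)) * gw x := by
    funext x
    rw [← Finset.sum_mul, ← map_sum, ← p.as_sum]
  rw [this]
  exact integrable_finset_sum _ (fun v _ => integrable_monomial_gw v (coeff v p))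

lemma integral_monomial_gw (d : Fin n →₀ ℕ) (c : ℝ) :
    ∫ x : Fin n → ℝ, eval x (monomial d c) * gw x = c * ∏ i, Mo (d i) := by
  simp only [monomial_gw_eq]
  rw [MeasureTheory.integral_const_mul]
  exact congrArg (c * ·) (MeasureTheory.integral_fintype_prod_eq_prod (ι := Fin n)
      (f := fun i (t : ℝ) => t ^ d i * Real.exp (-(2⁻¹ : ℝ) * t ^ 2)) (μ := fun _ => volume))

/-- The Gaussian integration functional on polynomials, as a linear map. -/
noncomputable def Jf (n : ℕ) : MvPolynomial (Fin n) ℝ →ₗ[ℝ] ℝ where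
  toFun p := ∫ x : Fin n → ℝ, eval x p * gw x
  map_add' p q := by
    simp only [map_add, add_mul]
    exact integral_add (integrable_gw p) (integrable_gw q)
  map_smul' c p := by
    simp only [MvPolynomial.smul_eq_C_mul, map_mul, eval_C, RingHom.id_apply, smul_eq_mul,
      mul_assoc]
    exact MeasureTheory.integral_const_mul c _

lemma Jf_monomial (d : Fin n →₀ ℕ) (c : ℝ) :
    Jf n (monomial d c) = c * ∏ i, Mo (d i) := by
  simpa [Jf] using integral_monomial_gw d c

/-- Stein's identity for the Gaussian functional. -/
lemma Jf_X_mul (i : Fin n) (p : MvPolynomial (Fin n) ℝ) :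
    Jf n (X i * p) = Jf n (pderiv i p) := by
  conv_lhs => rw [p.as_sum]
  conv_rhs => rw [p.as_sum]
  rw [Finset.mul_sum, map_sum, map_sum, map_sum]
  refine Finset.sum_congr rfl (fun d _ => ?_)
  rw [pderiv_monomial, X, monomial_mul, one_mul, Jf_monomial, Jf_monomial]
  rcases eq_or_ne n 0 with rfl | hn
  · exact i.elim0
  rw [← Finset.mul_prod_erase _ _ (Finset.mem_univ i),
      ← Finset.mul_prod_erase _ _ (Finset.mem_univ i)]
  have h1 : ((Finsupp.single i 1 + d : Fin n →₀ ℕ)) i = d i + 1 := by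
    rw [Finsupp.add_apply, Finsupp.single_eq_same, add_comm]
  have h2 : ((d - Finsupp.single i 1 : Fin n →₀ ℕ)) i = d i - 1 := by
    rw [Finsupp.tsub_apply, Finsupp.single_eq_same]
  have h3 : ∀ j ∈ Finset.univ.erase i, ((Finsupp.single i 1 + d : Fin n →₀ ℕ)) j = d j := by
    intro j hj
    rw [Finsupp.add_apply, Finsupp.single_apply, if_neg (Finset.ne_of_mem_erase hj).symm,
      zero_add]
  have h4 : ∀ j ∈ Finset.univ.erase i, ((d - Finsupp.single i 1 : Fin n →₀ ℕ)) j = d j := by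
    intro j hj
    rw [Finsupp.tsub_apply, Finsupp.single_apply, if_neg (Finset.ne_of_mem_erase hj).symm,
      Nat.sub_zero]
  have hp3 : ∏ x ∈ Finset.univ.erase i, Mo (((Finsupp.single i 1 + d : Fin n →₀ ℕ)) x)
      = ∏ x ∈ Finset.univ.erase i, Mo (d x) :=
    Finset.prod_congr rfl (fun j hj => by rw [h3 j hj])
  have hp4 : ∏ x ∈ Finset.univ.erase i, Mo (((d - Finsupp.single i 1 : Fin n →₀ ℕ)) x)
      = ∏ x ∈ Finset.univ.erase i, Mo (d x) :=
    Finset.prod_congr rfl (fun j hj => by rw [h4 j hj])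
  rw [h1, h2, hp3, hp4, mo_succ]
  ring

/-! ### Linear forms and their products -/

/-- The linear form `x ↦ ∑ i, v i * x i` as a polynomial. -/
noncomputable def Lp {n : ℕ} (v : Fin n → ℝ) : MvPolynomial (Fin n) ℝ := ∑ i, C (v i) * X i

/-- Product of powers of linear forms. -/
noncomputable def Pm {n M : ℕ} (m : Fin M → ℕ) (a : Fin M → (Fin n → ℝ)) :
    MvPolynomial (Fin n) ℝ := ∏ k, (Lp (a k)) ^ m k

lemma pderiv_Lp {n : ℕ} (i : Fin n) (v : Fin n → ℝ) : pderiv i (Lp v) = C (v i) := by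
  simp [Lp, pderiv_X, Pi.single_apply, mul_ite, Finset.sum_ite_eq']

lemma pderiv_prod {n : ℕ} {ι : Type*} [DecidableEq ι] (i : Fin n) (s : Finset ι)
    (f : ι → MvPolynomial (Fin n) ℝ) :
    pderiv i (∏ k ∈ s, f k) = ∑ k ∈ s, pderiv i (f k) * ∏ j ∈ s.erase k, f j := by
  induction s using Finset.induction_on with
  | empty => simp
  | @insert a s ha ih =>
    rw [Finset.prod_insert ha, pderiv_mul, ih, Finset.sum_insert ha,
      Finset.erase_insert ha, Finset.mul_sum]
    congr 1
    refine Finset.sum_congr rfl (fun k hk => ?_)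
    have hka : k ≠ a := by rintro rfl; exact ha hk
    rw [Finset.erase_insert_of_ne hka.symm, Finset.prod_insert (fun h => ha (Finset.mem_of_mem_erase h))]
    ring

lemma Pm_update {n M : ℕ} (m : Fin M → ℕ) (a : Fin M → (Fin n → ℝ)) (k : Fin M) (e : ℕ) :
    Pm (Function.update m k e) a = (Lp (a k)) ^ e * ∏ j ∈ Finset.univ.erase k, (Lp (a j)) ^ m j := by
  rw [Pm, ← Finset.mul_prod_erase _ _ (Finset.mem_univ k), Function.update_self]
  congr 1
  exact Finset.prod_congr rfl (fun j hj => by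
    rw [Function.update_of_ne (Finset.ne_of_mem_erase hj)])

lemma pderiv_Pm {n M : ℕ} (i : Fin n) (m : Fin M → ℕ) (a : Fin M → (Fin n → ℝ)) :
    pderiv i (Pm m a)
      = ∑ k, C ((m k : ℝ) * a k i) * Pm (Function.update m k (m k - 1)) a := by
  rw [Pm, pderiv_prod]
  refine Finset.sum_congr rfl (fun k _ => ?_)
  rw [(pderiv i).leibniz_pow, pderiv_Lp, Pm_update]
  simp only [nsmul_eq_mul, smul_eq_mul, C_mul, map_natCast]
  ring

/-! ### Stein identity for products of linear forms -/

lemma Jf_C_mul {n : ℕ} (c : ℝ) (p : MvPolynomial (Fin n) ℝ) :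
    Jf n (C c * p) = c * Jf n p := by
  rw [← MvPolynomial.smul_eq_C_mul, _root_.map_smul, smul_eq_mul]

lemma Jf_Lp_mul {n : ℕ} (v : Fin n → ℝ) (p : MvPolynomial (Fin n) ℝ) :
    Jf n (Lp v * p) = ∑ i, v i * Jf n (pderiv i p) := by
  rw [Lp, Finset.sum_mul, map_sum]
  refine Finset.sum_congr rfl (fun i _ => ?_)
  rw [mul_assoc, Jf_C_mul, Jf_X_mul]

lemma Jf_Pm_step {n M : ℕ} (m : Fin M → ℕ) (a : Fin M → (Fin n → ℝ)) (k0 : Fin M)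
    (hk0 : m k0 ≠ 0) :
    Jf n (Pm m a) = ∑ k, ((Function.update m k0 (m k0 - 1) k : ℝ)
        * (∑ i, a k0 i * a k i))
        * Jf n (Pm (Function.update (Function.update m k0 (m k0 - 1)) k
            (Function.update m k0 (m k0 - 1) k - 1)) a) := by
  set m' := Function.update m k0 (m k0 - 1) with hm'
  have hPm : Pm m a = Lp (a k0) * Pm m' a := by
    rw [hm', Pm_update, ← mul_assoc, ← pow_succ']
    have : m k0 - 1 + 1 = m k0 := Nat.succ_pred_eq_of_pos (Nat.pos_of_ne_zero hk0)
    rw [this, Pm, ← Finset.mul_prod_erase _ _ (Finset.mem_univ k0)]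
  rw [hPm, Jf_Lp_mul]
  have : ∀ i, Jf n (pderiv i (Pm m' a))
      = ∑ k, ((m' k : ℝ) * a k i) * Jf n (Pm (Function.update m' k (m' k - 1)) a) := by
    intro i
    rw [pderiv_Pm, map_sum]
    refine Finset.sum_congr rfl (fun k _ => ?_)
    rw [Jf_C_mul]
  simp only [this, Finset.mul_sum]
  rw [Finset.sum_comm]
  refine Finset.sum_congr rfl (fun k _ => ?_)
  rw [Finset.sum_mul]
  exact Finset.sum_congr rfl (fun i _ => by ring)

/-! ### Nonnegative-coefficient cone -/

lemma coeff_nonneg_mul {σ : Type*} [DecidableEq σ] {p q : MvPolynomial σ ℝ}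
    (hp : ∀ d, 0 ≤ coeff d p) (hq : ∀ d, 0 ≤ coeff d q) (d : σ →₀ ℕ) :
    0 ≤ coeff d (p * q) := by
  rw [coeff_mul]
  exact Finset.sum_nonneg fun x _ => mul_nonneg (hp _) (hq _)

lemma coeff_nonneg_C {σ : Type*} [DecidableEq σ] {c : ℝ} (hc : 0 ≤ c) (d : σ →₀ ℕ) :
    0 ≤ coeff d (C c : MvPolynomial σ ℝ) := by
  rw [coeff_C]; split_ifs <;> simp [hc]

lemma coeff_nonneg_X {σ : Type*} [DecidableEq σ] (v : σ) (d : σ →₀ ℕ) :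
    0 ≤ coeff d (X v : MvPolynomial σ ℝ) := by
  rw [coeff_X']; split_ifs <;> norm_num

/-! ### Sum-update helpers -/

lemma sum_update_le {M : ℕ} (f : Fin M → ℕ) (j : Fin M) :
    ∑ k, Function.update f j (f j - 1) k ≤ ∑ k, f k := by
  rw [Finset.sum_update_of_mem (Finset.mem_univ j), Finset.sdiff_singleton_eq_erase]
  have h := Finset.add_sum_erase Finset.univ f (Finset.mem_univ j)
  omega

lemma sum_update_pred {M : ℕ} (f : Fin M → ℕ) (j : Fin M) (hj : f j ≠ 0) :
    ∑ k, Function.update f j (f j - 1) k = (∑ k, f k) - 1 := by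
  rw [Finset.sum_update_of_mem (Finset.mem_univ j), Finset.sdiff_singleton_eq_erase]
  have h := Finset.add_sum_erase Finset.univ f (Finset.mem_univ j)
  omega

/-- canonical ordered pair index -/
def idx {M : ℕ} (i j : Fin M) : {p : Fin M × Fin M // p.1 ≤ p.2} :=
  if h : i ≤ j then ⟨(i, j), h⟩ else ⟨(j, i), le_of_not_ge h⟩

/-! ### The main Gaussian theorem -/

theorem gauss_main (n M : ℕ) (N : ℕ) :
    ∀ (m : Fin M → ℕ), (∑ k, m k) ≤ N →
    ∃ Q : MvPolynomial {p : Fin M × Fin M // p.1 ≤ p.2} ℝ,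
      (∀ d, 0 ≤ Q.coeff d) ∧ ∀ a : Fin M → (Fin n → ℝ),
        Jf n (Pm m a) = MvPolynomial.eval (fun p => ∑ i, a p.1.1 i * a p.1.2 i) Q := by
  induction N with
  | zero =>
    intro m hm
    have hm0 : ∀ k, m k = 0 := by
      intro k
      have h0 := Nat.le_zero.mp hm
      exact (Finset.sum_eq_zero_iff).mp h0 k (Finset.mem_univ k)
    refine ⟨C (Mo 0 ^ n), fun d => coeff_nonneg_C (pow_nonneg (mo_nonneg 0) n) d, fun a => ?_⟩
    have hPm1 : Pm m a = 1 := Finset.prod_eq_one (fun k _ => by rw [hm0 k, pow_zero])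
    have h1 : Jf n (1 : MvPolynomial (Fin n) ℝ) = Mo 0 ^ n := by
      have h2 := Jf_monomial (n := n) 0 1
      simpa using h2
    rw [hPm1, h1, eval_C]
  | succ N ih =>
    intro m hm
    rcases le_or_gt (∑ k, m k) N with h | h
    · exact ih m h
    have hex : ∃ k0, m k0 ≠ 0 := by
      by_contra hc
      push_neg at hc
      have h0 : ∑ k, m k = 0 := Finset.sum_eq_zero (fun k _ => hc k)
      omega
    obtain ⟨k0, hk0⟩ := hex
    set m' := Function.update m k0 (m k0 - 1) with hm'def
    have hQ : ∀ k : Fin M, ∃ Q : MvPolynomial {p : Fin M × Fin M // p.1 ≤ p.2} ℝ,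
        (∀ d, 0 ≤ Q.coeff d) ∧ ∀ a : Fin M → (Fin n → ℝ),
          Jf n (Pm (Function.update m' k (m' k - 1)) a)
            = MvPolynomial.eval (fun p => ∑ i, a p.1.1 i * a p.1.2 i) Q := by
      intro k
      apply ih
      have h1 := sum_update_le m' k
      have h2 := sum_update_pred m k0 hk0
      have h3 : ∑ k, m k = N + 1 := le_antisymm hm h
      rw [← hm'def] at h2
      omega
    choose Qk hQk1 hQk2 using hQ
    refine ⟨∑ k, C ((m' k : ℝ)) * (X (idx k0 k) * Qk k), ?_, ?_⟩
    · intro d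
      rw [coeff_sum]
      refine Finset.sum_nonneg fun k _ => ?_
      exact coeff_nonneg_mul (coeff_nonneg_C (by positivity))
        (coeff_nonneg_mul (coeff_nonneg_X _) (hQk1 k)) d
    · intro a
      rw [Jf_Pm_step m a k0 hk0, map_sum]
      refine Finset.sum_congr rfl fun k _ => ?_
      have hidx : (∑ i, a (idx k0 k).1.1 i * a (idx k0 k).1.2 i) = ∑ i, a k0 i * a k i := by
        rw [idx]
        split_ifs with h'
        · rfl
        · exact Finset.sum_congr rfl fun i _ => mul_comm _ _
      simp only [eval_mul, eval_C, eval_X]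
      rw [hidx, hQk2 k a]
      ring

/-! ### Transfer to Euclidean space -/

lemma eval_Lp {n : ℕ} (v x : Fin n → ℝ) : eval x (Lp v) = ∑ i, v i * x i := by
  simp [Lp]

lemma eval_Pm_inner {n M : ℕ} (m : Fin M → ℕ) (a : Fin M → EuclideanSpace ℝ (Fin n))
    (x : EuclideanSpace ℝ (Fin n)) :
    eval (fun i => x i) (Pm m (fun k i => a k i)) = ∏ k, (⟪x, a k⟫ : ℝ) ^ m k := by
  rw [Pm, map_prod]
  refine Finset.prod_congr rfl fun k _ => ?_
  rw [map_pow, eval_Lp]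
  congr 1

lemma gw_eq_exp {n : ℕ} (x : EuclideanSpace ℝ (Fin n)) :
    gw (fun i => x i) = Real.exp (-(2⁻¹ : ℝ) * ‖x‖ ^ 2) := by
  rw [gw, ← Real.exp_sum]
  congr 1
  rw [EuclideanSpace.norm_eq, Real.sq_sqrt (by positivity)]
  simp [Real.norm_eq_abs, sq_abs, Finset.mul_sum]

lemma integral_E_eq_Jf {n : ℕ} (p : MvPolynomial (Fin n) ℝ) :
    ∫ x : EuclideanSpace ℝ (Fin n),
      eval (fun i => x i) p * Real.exp (-(2⁻¹ : ℝ) * ‖x‖ ^ 2) = Jf n p := by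
  have hmp := EuclideanSpace.volume_preserving_symm_measurableEquiv_toLp (Fin n)
  have h := hmp.integral_comp (MeasurableEquiv.measurableEmbedding _)
    (fun y : Fin n → ℝ => eval y p * gw y)
  rw [show Jf n p = ∫ y : Fin n → ℝ, eval y p * gw y from rfl, ← h]
  refine integral_congr_ae (Filter.Eventually.of_forall fun x => ?_)
  simp only
  rw [← gw_eq_exp]
  rfl

/-- positivity of the radial factor -/
lemma radial_pos (j : ℕ) :
    0 < ∫ x in Set.Ioi (0:ℝ), x ^ j * Real.exp (-(2⁻¹ : ℝ) * x ^ 2) := by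
  have hf : 0 ≤ᶠ[ae (volume.restrict (Set.Ioi (0:ℝ)))]
      fun x => x ^ j * Real.exp (-(2⁻¹:ℝ) * x ^ 2) := by
    filter_upwards [ae_restrict_mem measurableSet_Ioi] with x hx
    exact (mul_pos (pow_pos hx j) (Real.exp_pos _)).le
  rw [setIntegral_pos_iff_support_of_nonneg_ae hf (integrable_mo j).integrableOn]
  have hsub : Set.Ioi (0:ℝ)
      ⊆ Function.support fun x => x ^ j * Real.exp (-(2⁻¹:ℝ) * x ^ 2) := by
    intro x hx
    exact (mul_pos (pow_pos hx j) (Real.exp_pos _)).ne'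
  refine lt_of_lt_of_le ?_ (measure_mono (Set.subset_inter hsub Set.Subset.rfl))
  rw [Real.volume_Ioi]
  simp

lemma sphere_gauss {n M : ℕ} (hn : 1 ≤ n) (m : Fin M → ℕ) (a : Fin M → EuclideanSpace ℝ (Fin n)) :
    ∫ x : EuclideanSpace ℝ (Fin n), (∏ k, (⟪x, a k⟫ : ℝ) ^ m k) * Real.exp (-(2⁻¹:ℝ) * ‖x‖ ^ 2)
      = (∫ σ : Metric.sphere (0 : EuclideanSpace ℝ (Fin n)) 1,
            ∏ k, (⟪(σ : EuclideanSpace ℝ (Fin n)), a k⟫ : ℝ) ^ m k ∂(volume.toSphere))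
        * ∫ r in Set.Ioi (0:ℝ),
            r ^ ((∑ k, m k) + (n - 1)) * Real.exp (-(2⁻¹:ℝ) * r ^ 2) := by
  haveI : Nontrivial (EuclideanSpace ℝ (Fin n)) := Module.nontrivial_of_finrank_pos (R := ℝ)
    (by rw [finrank_euclideanSpace_fin]; omega)
  set N := ∑ k, m k with hN
  set g : EuclideanSpace ℝ (Fin n) → ℝ :=
    fun x => (∏ k, (⟪x, a k⟫:ℝ) ^ m k) * Real.exp (-(2⁻¹:ℝ) * ‖x‖^2) with hg
  have hdim : Module.finrank ℝ (EuclideanSpace ℝ (Fin n)) = n := finrank_euclideanSpace_fin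
  have step1 : ∫ x : EuclideanSpace ℝ (Fin n), g x
      = ∫ x : ({(0:EuclideanSpace ℝ (Fin n))}ᶜ : Set (EuclideanSpace ℝ (Fin n))), g x ∂((volume : Measure (EuclideanSpace ℝ (Fin n))).comap Subtype.val) := by
    rw [integral_subtype_comap (measurableSet_singleton _).compl,
      MeasureTheory.restrict_compl_singleton]
  have step2 : ∫ x : ({(0:EuclideanSpace ℝ (Fin n))}ᶜ : Set (EuclideanSpace ℝ (Fin n))), g x ∂((volume : Measure (EuclideanSpace ℝ (Fin n))).comap Subtype.val)
      = ∫ p : Metric.sphere (0:EuclideanSpace ℝ (Fin n)) 1 × Set.Ioi (0:ℝ),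
          (g ∘ Subtype.val ∘ (homeomorphUnitSphereProd (EuclideanSpace ℝ (Fin n))).symm) p
          ∂((volume : Measure (EuclideanSpace ℝ (Fin n))).toSphere.prod
            (Measure.volumeIoiPow (Module.finrank ℝ (EuclideanSpace ℝ (Fin n)) - 1))) := by
    rw [← (volume : Measure (EuclideanSpace ℝ (Fin n))).measurePreserving_homeomorphUnitSphereProd.integral_comp
      (Homeomorph.measurableEmbedding _) (g ∘ Subtype.val ∘ (homeomorphUnitSphereProd (EuclideanSpace ℝ (Fin n))).symm)]
    exact integral_congr_ae (Filter.Eventually.of_forall fun x => by simp)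
  have hpt : ∀ p : Metric.sphere (0:EuclideanSpace ℝ (Fin n)) 1 × Set.Ioi (0:ℝ),
      (g ∘ Subtype.val ∘ (homeomorphUnitSphereProd (EuclideanSpace ℝ (Fin n))).symm) p
        = (∏ k, (⟪(p.1 : EuclideanSpace ℝ (Fin n)), a k⟫:ℝ) ^ m k)
          * ((p.2 : ℝ) ^ N * Real.exp (-(2⁻¹:ℝ) * (p.2:ℝ) ^ 2)) := by
    rintro ⟨σ, r⟩
    have hr : (0:ℝ) < r := r.2
    have hσ : ‖(σ : EuclideanSpace ℝ (Fin n))‖ = 1 := by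
      have := σ.2
      rwa [mem_sphere_iff_norm, sub_zero] at this
    simp only [Function.comp_apply, homeomorphUnitSphereProd_symm_apply_coe, hg]
    have hnorm : ‖(r:ℝ) • (σ:EuclideanSpace ℝ (Fin n))‖ = (r:ℝ) := by
      rw [norm_smul, hσ, mul_one, Real.norm_eq_abs, abs_of_pos hr]
    have hip : ∀ k, (⟪(r:ℝ) • (σ:EuclideanSpace ℝ (Fin n)), a k⟫ : ℝ) = (r:ℝ) * ⟪(σ:EuclideanSpace ℝ (Fin n)), a k⟫ := fun k =>
      real_inner_smul_left _ _ _
    simp only [hip, mul_pow, hnorm]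
    rw [Finset.prod_mul_distrib, Finset.prod_pow_eq_pow_sum]
    ring
  have step3 : ∫ p : Metric.sphere (0:EuclideanSpace ℝ (Fin n)) 1 × Set.Ioi (0:ℝ),
      (g ∘ Subtype.val ∘ (homeomorphUnitSphereProd (EuclideanSpace ℝ (Fin n))).symm) p
      ∂((volume : Measure (EuclideanSpace ℝ (Fin n))).toSphere.prod
        (Measure.volumeIoiPow (Module.finrank ℝ (EuclideanSpace ℝ (Fin n)) - 1)))
      = (∫ σ : Metric.sphere (0:EuclideanSpace ℝ (Fin n)) 1, ∏ k, (⟪(σ : EuclideanSpace ℝ (Fin n)), a k⟫ : ℝ) ^ m k ∂(volume.toSphere))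
        * ∫ r : Set.Ioi (0:ℝ), ((r:ℝ) ^ N * Real.exp (-(2⁻¹:ℝ) * (r:ℝ) ^ 2))
            ∂(Measure.volumeIoiPow (n - 1)) := by
    rw [integral_congr_ae (Filter.Eventually.of_forall hpt), hdim]
    exact integral_prod_mul
      (f := fun σ : Metric.sphere (0:EuclideanSpace ℝ (Fin n)) 1 => ∏ k, (⟪(σ : EuclideanSpace ℝ (Fin n)), a k⟫ : ℝ) ^ m k)
      (g := fun r : Set.Ioi (0:ℝ) => (r:ℝ) ^ N * Real.exp (-(2⁻¹:ℝ) * (r:ℝ) ^ 2))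
  have step4 : ∫ r : Set.Ioi (0:ℝ), ((r:ℝ) ^ N * Real.exp (-(2⁻¹:ℝ) * (r:ℝ) ^ 2))
        ∂(Measure.volumeIoiPow (n - 1))
      = ∫ x in Set.Ioi (0:ℝ), x ^ (N + (n - 1)) * Real.exp (-(2⁻¹:ℝ) * x ^ 2) := by
    simp only [Measure.volumeIoiPow, ENNReal.ofReal]
    rw [integral_withDensity_eq_integral_smul
      ((measurable_subtype_coe.pow_const _).real_toNNReal),
      integral_subtype_comap measurableSet_Ioi
        (fun y : ℝ => Real.toNNReal (y ^ (n-1)) • (y ^ N * Real.exp (-(2⁻¹:ℝ) * y ^ 2)))]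
    refine setIntegral_congr_fun measurableSet_Ioi (fun x hx => ?_)
    rw [NNReal.smul_def, Real.coe_toNNReal _ (pow_nonneg (le_of_lt hx) _), smul_eq_mul,
      pow_add]
    ring
  rw [step4] at step3
  exact step1.trans (step2.trans step3)

end SpherePoly

/-- The spherical average of a product of powers of linear forms is a polynomial with
nonnegative coefficients in the pairwise inner products `a_i·a_j` (for `i ≤ j`). -/
theorem sphere_integral_poly_in_inner_products (n M : ℕ) (hn : 2 ≤ n) (hM : 1 ≤ M)
    (m : Fin M → ℕ) :
    ∃ Q : MvPolynomial {p : Fin M × Fin M // p.1 ≤ p.2} ℝ,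
      (∀ d, 0 ≤ Q.coeff d) ∧
      ∀ a : Fin M → EuclideanSpace ℝ (Fin n),
        ∫ σ : Metric.sphere (0 : EuclideanSpace ℝ (Fin n)) 1,
            ∏ k, (⟪(σ : EuclideanSpace ℝ (Fin n)), a k⟫ : ℝ) ^ m k ∂(sphereUniform n)
          = MvPolynomial.eval (fun p => (⟪a p.1.1, a p.1.2⟫ : ℝ)) Q := by

  classical
  obtain ⟨Q0, hQ0c, hQ0⟩ := SpherePoly.gauss_main n M (∑ k, m k) m le_rfl
  set N := ∑ k, m k with hN
  set c := ∫ r in Set.Ioi (0:ℝ), r ^ (N + (n - 1)) * Real.exp (-(2⁻¹:ℝ) * r ^ 2) with hc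
  have hcpos : 0 < c := SpherePoly.radial_pos (N + (n - 1))
  set t := (((volume : Measure (EuclideanSpace ℝ (Fin n))).toSphere Set.univ)⁻¹).toReal with ht
  refine ⟨MvPolynomial.C (t * c⁻¹) * Q0, ?_, ?_⟩
  · exact fun d => SpherePoly.coeff_nonneg_mul
      (SpherePoly.coeff_nonneg_C
        (mul_nonneg ENNReal.toReal_nonneg (inv_nonneg.2 hcpos.le))) hQ0c d
  · intro a
    have hga := SpherePoly.sphere_gauss (n := n) (by omega) m a
    have hJ : ∫ x : EuclideanSpace ℝ (Fin n),
        (∏ k, (⟪x, a k⟫:ℝ) ^ m k) * Real.exp (-(2⁻¹:ℝ) * ‖x‖ ^ 2)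
          = SpherePoly.Jf n (SpherePoly.Pm m (fun k i => a k i)) := by
      rw [← SpherePoly.integral_E_eq_Jf]
      refine integral_congr_ae (Filter.Eventually.of_forall fun x => ?_)
      simp only
      rw [SpherePoly.eval_Pm_inner]
    have hfun : (fun p : {p : Fin M × Fin M // p.1 ≤ p.2} =>
          ∑ i, a p.1.1 i * a p.1.2 i)
        = fun p => (⟪a p.1.1, a p.1.2⟫ : ℝ) := by
      funext p
      rw [PiLp.inner_apply]
      simp
      exact Finset.sum_congr rfl fun i _ => mul_comm _ _
    have hev : SpherePoly.Jf n (SpherePoly.Pm m (fun k i => a k i))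
        = MvPolynomial.eval (fun p => (⟪a p.1.1, a p.1.2⟫ : ℝ)) Q0 := by
      rw [hQ0 (fun k i => a k i), hfun]
    have hS : (∫ σ : Metric.sphere (0 : EuclideanSpace ℝ (Fin n)) 1,
          ∏ k, (⟪(σ : EuclideanSpace ℝ (Fin n)), a k⟫ : ℝ) ^ m k ∂(volume.toSphere))
        = MvPolynomial.eval (fun p => (⟪a p.1.1, a p.1.2⟫ : ℝ)) Q0 * c⁻¹ := by
      have h1 : (∫ σ : Metric.sphere (0 : EuclideanSpace ℝ (Fin n)) 1,
          ∏ k, (⟪(σ : EuclideanSpace ℝ (Fin n)), a k⟫ : ℝ) ^ m k ∂(volume.toSphere)) * c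
          = MvPolynomial.eval (fun p => (⟪a p.1.1, a p.1.2⟫ : ℝ)) Q0 := by
        rw [← hev, ← hJ, hga]
      field_simp at h1 ⊢
      linarith [h1]
    rw [sphereUniform, integral_smul_measure, hS]
    rw [MvPolynomial.eval_mul, MvPolynomial.eval_C]
    rw [smul_eq_mul]
    ring
end

section
/- Let F be a real symmetric positive definite N×N matrix whose off-diagonal entries are all ≤ 0. Then all entries of F^{-1} are nonnegative. -/
open Matrix


/-- If `F` is a real symmetric positive definite matrix with nonpositive off-diagonal
entries, then all entries of `F⁻¹` are nonnegative. -/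
theorem matrix_inv_ferromagnetic_nonneg (N : ℕ) (F : Matrix (Fin N) (Fin N) ℝ)
    (hsym : F.IsSymm) (hpos : F.PosDef) (hferro : ∀ i j, i ≠ j → F i j ≤ 0) :
    ∀ i j, 0 ≤ F⁻¹ i j := by
  intro i j
  by_contra hneg
  push_neg at hneg
  set x : Fin N → ℝ := fun k => F⁻¹ k j with hxdef
  set y : Fin N → ℝ := fun k => max (-(x k)) 0 with hydef
  set p : Fin N → ℝ := fun k => max (x k) 0 with hpdef
  have hy0 : ∀ k, 0 ≤ y k := fun k => le_max_right _ _
  have hp0 : ∀ k, 0 ≤ p k := fun k => le_max_right _ _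
  have hyi : 0 < y i := by
    simp only [hydef]
    exact lt_max_of_lt_left (by linarith)
  have hyne : y ≠ 0 := by
    intro h
    rw [h] at hyi
    exact lt_irrefl 0 hyi
  -- F * F⁻¹ = 1
  have hinv : F * F⁻¹ = 1 := F.mul_nonsing_inv (isUnit_iff_ne_zero.mpr hpos.det_pos.ne')
  have hFx : ∀ k, (F *ᵥ x) k = if k = j then 1 else 0 := by
    intro k
    have : (F * F⁻¹) k j = (1 : Matrix (Fin N) (Fin N) ℝ) k j := by rw [hinv]
    simpa [Matrix.mul_apply, Matrix.mulVec, dotProduct, Matrix.one_apply] using this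
  have hpy : ∀ k, y k = p k - x k := by
    intro k
    simp only [hydef, hpdef]
    rcases le_total (x k) 0 with h | h
    · rw [max_eq_left (by linarith), max_eq_right h]; ring
    · rw [max_eq_right (by linarith), max_eq_left h]; ring
  have hyeq : y = p - x := funext fun k => hpy k
  -- quadratic form is nonpositive
  have hq : y ⬝ᵥ (F *ᵥ y) ≤ 0 := by
    have h1 : y ⬝ᵥ (F *ᵥ y) = y ⬝ᵥ (F *ᵥ p) - y ⬝ᵥ (F *ᵥ x) := by
      rw [hyeq, Matrix.mulVec_sub, dotProduct_sub]
    have h2 : 0 ≤ y ⬝ᵥ (F *ᵥ x) := by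
      apply Finset.sum_nonneg
      intro k _
      have := hFx k
      rw [this]
      by_cases hk : k = j <;> simp [hk, hy0]
    have h3 : y ⬝ᵥ (F *ᵥ p) ≤ 0 := by
      have hterm : ∀ a k, y a * (F a k * p k) ≤ 0 := by
        intro a k
        rcases lt_or_ge (x a) 0 with ha | ha
        · rcases lt_or_ge 0 (x k) with hk | hk
          · have hak : a ≠ k := by
              intro h; rw [h] at ha; linarith
            exact mul_nonpos_of_nonneg_of_nonpos (hy0 a)
              (mul_nonpos_of_nonpos_of_nonneg (hferro a k hak) (hp0 k))
          · have hpk : p k = 0 := max_eq_right hk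
            simp [hpk]
        · have hya : y a = 0 := max_eq_right (by linarith)
          simp [hya]
      have hrw : y ⬝ᵥ (F *ᵥ p) = ∑ a, ∑ k, y a * (F a k * p k) := by
        simp [dotProduct, Matrix.mulVec, Finset.mul_sum]
      rw [hrw]
      exact Finset.sum_nonpos fun a _ => Finset.sum_nonpos fun k _ => hterm a k
    linarith
  have := hpos.dotProduct_mulVec_pos hyne
  simp only [star_trivial] at this
  linarith
end
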